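/- arXiv:2211.00169 — 5 statements merged into one kernel-verified Lean document; each statement's English description precedes it below -/
import Mathlib

section
/- Consider the SIS model with multi-layer population dispersal. If the initial infected fractions satisfy p^α_i(0) ∈ [0,1] for all i, α, and p(0) is not identically zero (i.e. p^σ_j(0) > 0 for at least one pair (j,σ)), then p^α_i(t) > 0 for every i ∈ {1,…,n}, every α ∈ {1,…,m}, and every t > 0. -/
open Matrix BigOperators Finset Filter Topology
open Set
set_option maxHeartbeats 1000000

/-- `fFrac x σ i` is the fraction of the total population at node `i`
contributed by class (layer) `σ`. -/
noncomputable def fFrac {n m : ℕ} (x : Fin m → Fin n → ℝ) (σ : Fin m) (i : Fin n) : ℝ :=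
  x σ i / ∑ τ, x τ i

/-- `lEnt Q x α i j` is the `(i,j)` entry of the dispersal Laplacian `L^α(x)`. -/
noncomputable def lEnt {n m : ℕ} (Q : Fin m → Matrix (Fin n) (Fin n) ℝ)
    (x : Fin m → Fin n → ℝ) (α : Fin m) (i j : Fin n) : ℝ :=
  if i = j then (∑ k ∈ Finset.univ \ {i}, Q α k i * x α k) / x α i
  else -(Q α j i * x α j / x α i)

lemma hasDerivAt_maxsq (c : ℝ) :
    HasDerivAt (fun y : ℝ => (max 0 y) ^ 2) (2 * max 0 c) c := by
  rcases lt_trichotomy c 0 with hc | rfl | hc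
  · have h : (fun y : ℝ => (max 0 y) ^ 2) =ᶠ[nhds c] fun _ => (0:ℝ) := by
      filter_upwards [eventually_lt_nhds hc] with y hy
      simp [max_eq_left hy.le]
    have h2 := (hasDerivAt_const c (0:ℝ)).congr_of_eventuallyEq h
    simpa [max_eq_left hc.le] using h2
  · rw [hasDerivAt_iff_tendsto_slope]
    have h0 : Filter.Tendsto (fun y : ℝ => |y|) (nhdsWithin 0 {(0:ℝ)}ᶜ) (nhds 0) := by
      have := (continuous_abs.tendsto (0:ℝ)).mono_left (nhdsWithin_le_nhds (s := {(0:ℝ)}ᶜ))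
      simpa using this
    have key : Filter.Tendsto (slope (fun y : ℝ => (max 0 y) ^ 2) 0)
        (nhdsWithin 0 {(0:ℝ)}ᶜ) (nhds 0) := by
      apply squeeze_zero_norm' _ h0
      filter_upwards [self_mem_nhdsWithin] with y hy
      have hy' : y ≠ 0 := hy
      rcases le_or_gt y 0 with h | h
      · simp [slope, max_eq_left h]
      · rw [slope_def_field]
        simp only [max_eq_right h.le, max_eq_left (le_refl (0:ℝ)),
          ne_eq, OfNat.ofNat_ne_zero, not_false_eq_true, zero_pow, sub_zero]
        rw [div_eq_mul_inv, sq]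
        rw [mul_assoc, mul_inv_cancel₀ hy', mul_one]
        simp [abs_of_pos h]
    simpa using key
  · have h : (fun y : ℝ => (max 0 y) ^ 2) =ᶠ[nhds c] fun y => y ^ 2 := by
      filter_upwards [eventually_gt_nhds hc] with y hy
      simp [max_eq_right hy.le]
    have h2 := (hasDerivAt_pow 2 c).congr_of_eventuallyEq h
    simpa [max_eq_right hc.le, two_mul, mul_comm] using h2

/-- If `g' ≥ 0` on `[a,b]` then `g` is monotone on `[a,b]`. -/
lemma monotoneOn_of_hasDerivAt_nonneg {g g' : ℝ → ℝ} {a b : ℝ}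
    (hd : ∀ t ∈ Icc a b, HasDerivAt g (g' t) t)
    (h0 : ∀ t ∈ Icc a b, 0 ≤ g' t) : MonotoneOn g (Icc a b) := by
  apply monotoneOn_of_deriv_nonneg (convex_Icc a b)
  · exact fun t ht => ((hd t ht).continuousAt).continuousWithinAt
  · intro t ht
    rw [interior_Icc] at ht
    exact ((hd t (Ioo_subset_Icc_self ht)).differentiableAt).differentiableWithinAt
  · intro t ht
    rw [interior_Icc] at ht
    rw [(hd t (Ioo_subset_Icc_self ht)).deriv]
    exact h0 t (Ioo_subset_Icc_self ht)

/-- Gronwall-type: `f' ≤ C f` on `[a,b]` implies `f b ≤ exp(C(b-a)) f a`. -/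
lemma le_exp_mul_of_deriv_le {f f' : ℝ → ℝ} {C a b : ℝ} (hab : a ≤ b)
    (hd : ∀ t ∈ Icc a b, HasDerivAt f (f' t) t)
    (hle : ∀ t ∈ Icc a b, f' t ≤ C * f t) :
    f b ≤ Real.exp (C * (b - a)) * f a := by
  set g : ℝ → ℝ := fun t => Real.exp (-C * t) * f t with hg
  have hgd : ∀ t ∈ Icc a b, HasDerivAt g
      (Real.exp (-C * t) * (-C) * f t + Real.exp (-C * t) * f' t) t := by
    intro t ht
    have := (((hasDerivAt_id t).const_mul (-C)).exp).fun_mul (hd t ht)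
    simpa [hg] using this
  have hmono : MonotoneOn (fun t => -g t) (Icc a b) := by
    apply monotoneOn_of_hasDerivAt_nonneg (g' := fun t =>
      -(Real.exp (-C * t) * (-C) * f t + Real.exp (-C * t) * f' t))
    · exact fun t ht => (hgd t ht).neg
    · intro t ht
      have h1 := hle t ht
      have h2 : (0:ℝ) < Real.exp (-C * t) := Real.exp_pos _
      nlinarith [h2.le]
  have hmle := hmono (left_mem_Icc.2 hab) (right_mem_Icc.2 hab) hab
  have hgb : Real.exp (-C * b) * f b ≤ Real.exp (-C * a) * f a := by
    have : g b ≤ g a := by dsimp only at hmle; linarith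
    simpa [hg] using this
  have e1 : Real.exp (C * b) * Real.exp (-C * b) = 1 := by
    rw [← Real.exp_add]; norm_num
  have h4 := mul_le_mul_of_nonneg_left hgb (Real.exp_pos (C * b)).le
  calc f b = Real.exp (C * b) * (Real.exp (-C * b) * f b) := by
        rw [← mul_assoc, e1, one_mul]
    _ ≤ Real.exp (C * b) * (Real.exp (-C * a) * f a) := h4
    _ = Real.exp (C * (b - a)) * f a := by
        rw [← mul_assoc, ← Real.exp_add]; ring_nf

/-- Gronwall-type: `-C f ≤ f'` on `[a,b]` implies `exp(-C(b-a)) f a ≤ f b`. -/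
lemma exp_mul_le_of_deriv_ge {f f' : ℝ → ℝ} {C a b : ℝ} (hab : a ≤ b)
    (hd : ∀ t ∈ Icc a b, HasDerivAt f (f' t) t)
    (hge : ∀ t ∈ Icc a b, -C * f t ≤ f' t) :
    Real.exp (-C * (b - a)) * f a ≤ f b := by
  have := le_exp_mul_of_deriv_le (f := fun t => -f t) (f' := fun t => -f' t) (C := -C) hab
    (fun t ht => (hd t ht).neg)
    (fun t ht => by have := hge t ht; linarith)
  simp only [neg_mul, neg_neg] at this ⊢
  linarith [this]

/-- If `f' ≥ -C f + h`, `h ≥ 0`, `f a ≥ 0`, and `h` is strictly positive anywhere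
`f` vanishes in the interior, then `f b > 0`. -/
lemma pos_of_deriv_ge_source {f h f' : ℝ → ℝ} {C a b : ℝ} (hab : a < b)
    (hd : ∀ t ∈ Icc a b, HasDerivAt f (f' t) t)
    (hge : ∀ t ∈ Icc a b, -C * f t + h t ≤ f' t)
    (hh : ∀ t ∈ Icc a b, 0 ≤ h t)
    (hfa : 0 ≤ f a)
    (hcrit : ∀ s ∈ Ioo a b, f s = 0 → 0 < h s) :
    0 < f b := by
  by_contra hfb
  push_neg at hfb
  have hge' : ∀ t ∈ Icc a b, -C * f t ≤ f' t := fun t ht =>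
    le_trans (by linarith [hh t ht]) (hge t ht)
  have hfb0 : f b = 0 := le_antisymm hfb (by
    have := exp_mul_le_of_deriv_ge hab.le hd hge'
    nlinarith [Real.exp_pos (-C * (b - a)), this])
  set g : ℝ → ℝ := fun t => Real.exp (C * t) * f t with hgdef
  have hgd : ∀ t ∈ Icc a b, HasDerivAt g
      (Real.exp (C * t) * C * f t + Real.exp (C * t) * f' t) t := by
    intro t ht
    have := (((hasDerivAt_id t).const_mul C).exp).fun_mul (hd t ht)
    simpa [hgdef] using this
  have hg' : ∀ t ∈ Icc a b,
      Real.exp (C * t) * h t ≤ Real.exp (C * t) * C * f t + Real.exp (C * t) * f' t := by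
    intro t ht
    have h1 := hge t ht
    have h2 : (0:ℝ) < Real.exp (C * t) := Real.exp_pos _
    nlinarith
  have hmono : MonotoneOn g (Icc a b) :=
    monotoneOn_of_hasDerivAt_nonneg hgd (fun t ht => by
      have := hg' t ht
      have h2 : (0:ℝ) ≤ Real.exp (C * t) := (Real.exp_pos _).le
      nlinarith [hh t ht])
  have hga : g a = 0 ∨ 0 < g a := by
    rcases lt_or_eq_of_le (mul_nonneg (Real.exp_pos (C*a)).le hfa) with h | h
    · exact Or.inr h
    · exact Or.inl h.symm
  have hgb : g b = 0 := by simp [hgdef, hfb0]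
  have hgale : g a ≤ g b := hmono (left_mem_Icc.2 hab.le) (right_mem_Icc.2 hab.le) hab.le
  have hga0 : g a = 0 := by
    rcases hga with h | h
    · exact h
    · linarith [hgb ▸ hgale]
  -- g vanishes identically on [a,b]
  have hgzero : ∀ t ∈ Icc a b, g t = 0 := by
    intro t ht
    have h1 := hmono (left_mem_Icc.2 hab.le) ht ht.1
    have h2 := hmono ht (right_mem_Icc.2 hab.le) ht.2
    rw [hga0] at h1; rw [hgb] at h2
    linarith
  set s : ℝ := (a + b) / 2 with hs
  have hsmem : s ∈ Ioo a b := ⟨by linarith, by linarith⟩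
  have hfs : f s = 0 := by
    have := hgzero s (Ioo_subset_Icc_self hsmem)
    have hexp : (0:ℝ) < Real.exp (C * s) := Real.exp_pos _
    simp only [hgdef] at this
    exact (mul_eq_zero.mp this).resolve_left hexp.ne'
  have hhs : 0 < h s := hcrit s hsmem hfs
  have hcongr : g =ᶠ[nhds s] fun _ => (0:ℝ) := by
    filter_upwards [Ioo_mem_nhds hsmem.1 hsmem.2] with t ht
    exact hgzero t (Ioo_subset_Icc_self ht)
  have hd0 : HasDerivAt g 0 s :=
    (hasDerivAt_const s (0:ℝ)).congr_of_eventuallyEq hcongr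
  have huniq := (hgd s (Ioo_subset_Icc_self hsmem)).unique hd0
  have := hg' s (Ioo_subset_Icc_self hsmem)
  rw [huniq] at this
  nlinarith [Real.exp_pos (C * s)]

lemma max_neg_mul_self (P : ℝ) : max 0 (-P) * P = -(max 0 (-P))^2 := by
  rcases le_or_gt (-P) 0 with h | h
  · simp [max_eq_left h]
  · rw [max_eq_right h.le]; ring
lemma max_sub_one_mul_self (P : ℝ) : max 0 (P - 1) * P = max 0 (P - 1) + (max 0 (P - 1))^2 := by
  rcases le_or_gt (P - 1) 0 with h | h
  · simp [max_eq_left h]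
  · rw [max_eq_right h.le]; ring
lemma mul_le_of_sq_le {a b V : ℝ} (ha : 0 ≤ a) (hb : 0 ≤ b) (h1 : a^2 ≤ V) (h2 : b^2 ≤ V) :
    a * b ≤ V := by nlinarith

/-- Positivity of populations. -/
lemma x_positive {n m : ℕ} (Q : Fin m → Matrix (Fin n) (Fin n) ℝ)
    (hQoff : ∀ (α : Fin m) (i j : Fin n), i ≠ j → 0 ≤ Q α i j)
    (x : ℝ → Fin m → Fin n → ℝ)
    (hx0 : ∀ α i, 0 < x 0 α i)
    (hx : ∀ (α : Fin m) (i : Fin n) (t : ℝ), 0 ≤ t →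
      HasDerivAt (fun s => x s α i) (∑ j, Q α j i * x t α j) t) :
    ∀ t, 0 ≤ t → ∀ α i, 0 < x t α i := by
  have hnonneg : ∀ T, 0 ≤ T → ∀ α i, 0 ≤ x T α i := by
    intro T hT
    set v : ℝ → ℝ := fun t => ∑ α : Fin m, ∑ i : Fin n, (max 0 (-(x t α i)))^2 with hv
    set v' : ℝ → ℝ := fun t => ∑ α : Fin m, ∑ i : Fin n,
      2 * max 0 (-(x t α i)) * (-(∑ j, Q α j i * x t α j)) with hv'
    set K : ℝ := ∑ α : Fin m, ∑ i : Fin n, ∑ j : Fin n, 2 * |Q α j i| with hK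
    have hvd : ∀ t ∈ Icc 0 T, HasDerivAt v (v' t) t := by
      intro t ht
      apply HasDerivAt.fun_sum; intro α _
      apply HasDerivAt.fun_sum; intro i _
      exact (hasDerivAt_maxsq (-(x t α i))).comp t (hx α i t ht.1).neg
    have hvnonneg : ∀ t, 0 ≤ v t := by
      intro t
      apply Finset.sum_nonneg; intro α _
      apply Finset.sum_nonneg; intro i _
      positivity
    have hest : ∀ t ∈ Icc 0 T, v' t ≤ K * v t := by
      intro t ht
      rw [hK, Finset.sum_mul]
      apply Finset.sum_le_sum; intro α _
      rw [Finset.sum_mul]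
      apply Finset.sum_le_sum; intro i _
      rw [Finset.sum_mul]
      have expand : 2 * max 0 (-(x t α i)) * (-(∑ j, Q α j i * x t α j))
          = ∑ j : Fin n, 2 * (max 0 (-(x t α i)) * (-(Q α j i * x t α j))) := by
        rw [← Finset.sum_neg_distrib, Finset.mul_sum]
        · congr 1; ext j; ring
      rw [expand]
      apply Finset.sum_le_sum; intro j _
      set u : Fin n → ℝ := fun k => max 0 (-(x t α k)) with hu
      have hu0 : ∀ k, 0 ≤ u k := fun k => le_max_left _ _
      have husq : ∀ k, (u k)^2 ≤ v t := by
        intro k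
        rw [hv]
        calc (u k)^2 ≤ ∑ i : Fin n, (max 0 (-(x t α i)))^2 := by
              apply Finset.single_le_sum (f := fun i => (max 0 (-(x t α i)))^2)
                (fun i _ => by positivity) (Finset.mem_univ k)
          _ ≤ _ := by
              apply Finset.single_le_sum
                (f := fun α => ∑ i : Fin n, (max 0 (-(x t α i)))^2)
                (fun α _ => Finset.sum_nonneg fun i _ => by positivity) (Finset.mem_univ α)
      rcases eq_or_ne j i with rfl | hji
      · have hux : u j * x t α j = -(u j)^2 := max_neg_mul_self (x t α j)
        have heq : u j * (-(Q α j j * x t α j)) = Q α j j * (u j)^2 := by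
          linear_combination (-(Q α j j)) * hux
        have h1 : Q α j j * (u j)^2 ≤ |Q α j j| * (u j)^2 := by
          apply mul_le_mul_of_nonneg_right (le_abs_self _) (by positivity)
        have h2 : |Q α j j| * (u j)^2 ≤ |Q α j j| * v t :=
          mul_le_mul_of_nonneg_left (husq j) (abs_nonneg _)
        nlinarith [heq, h1, h2]
      · have hQ : 0 ≤ Q α j i := hQoff α j i hji
        have hxlb : -(x t α j) ≤ u j := le_max_right _ _
        have : u i * (-(Q α j i * x t α j)) ≤ Q α j i * (u i * u j) := by
          have : -(Q α j i * x t α j) = Q α j i * (-(x t α j)) := by ring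
          rw [this]
          calc u i * (Q α j i * (-(x t α j))) ≤ u i * (Q α j i * u j) := by
                apply mul_le_mul_of_nonneg_left _ (hu0 i)
                exact mul_le_mul_of_nonneg_left hxlb hQ
            _ = Q α j i * (u i * u j) := by ring
        have h2 : u i * u j ≤ v t := mul_le_of_sq_le (hu0 i) (hu0 j) (husq i) (husq j)
        calc 2 * (u i * (-(Q α j i * x t α j))) ≤ 2 * (Q α j i * (u i * u j)) := by linarith
          _ ≤ 2 * |Q α j i| * v t := by
              rw [abs_of_nonneg hQ, mul_assoc]
              nlinarith
    have hv0 : v 0 = 0 := by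
      rw [hv]
      apply Finset.sum_eq_zero; intro α _
      apply Finset.sum_eq_zero; intro i _
      rw [max_eq_left (by linarith [hx0 α i])]
      norm_num
    have hfin := le_exp_mul_of_deriv_le hT hvd hest
    rw [hv0, mul_zero] at hfin
    have hvT : v T = 0 := le_antisymm hfin (hvnonneg T)
    intro α i
    by_contra hneg
    push_neg at hneg
    have h1 : 0 < (max 0 (-(x T α i)))^2 := by
      rw [max_eq_right (by linarith)]
      have : (0:ℝ) < -(x T α i) := by linarith
      exact pow_pos this 2
    have h2 : (max 0 (-(x T α i)))^2 ≤ v T := by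
      rw [hv]
      calc (max 0 (-(x T α i)))^2 ≤ ∑ i : Fin n, (max 0 (-(x T α i)))^2 :=
            Finset.single_le_sum (f := fun i => (max 0 (-(x T α i)))^2)
              (fun i _ => by positivity) (Finset.mem_univ i)
        _ ≤ _ := Finset.single_le_sum (f := fun α => ∑ i : Fin n, (max 0 (-(x T α i)))^2)
              (fun α _ => Finset.sum_nonneg fun i _ => by positivity) (Finset.mem_univ α)
    rw [hvT] at h2
    linarith
  intro T hT α i
  have hkey : ∀ t ∈ Icc 0 T, -(-(Q α i i)) * x t α i ≤ ∑ j, Q α j i * x t α j := by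
    intro t ht
    rw [neg_neg]
    have hsp : ∑ j, Q α j i * x t α j
        = (∑ j ∈ Finset.univ \ {i}, Q α j i * x t α j) + Q α i i * x t α i :=
      Finset.sum_eq_sum_sdiff_singleton_add (Finset.mem_univ i) _
    have hrest : 0 ≤ ∑ j ∈ Finset.univ \ {i}, Q α j i * x t α j := by
      apply Finset.sum_nonneg
      intro j hj
      rw [Finset.mem_sdiff, Finset.mem_singleton] at hj
      exact mul_nonneg (hQoff α j i hj.2) (hnonneg t ht.1 α j)
    linarith
  have hfin := exp_mul_le_of_deriv_ge hT (fun t ht => hx α i t ht.1) hkey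
  have h0 := hx0 α i
  nlinarith [Real.exp_pos (-(-(Q α i i)) * (T - 0)), hfin]

lemma le_sum2 {m n : ℕ} {f : Fin m → Fin n → ℝ} (hf : ∀ a b, 0 ≤ f a b)
    (a : Fin m) (b : Fin n) : f a b ≤ ∑ a, ∑ b, f a b := by
  calc f a b ≤ ∑ b, f a b := Finset.single_le_sum (fun b _ => hf a b) (Finset.mem_univ b)
    _ ≤ ∑ a, ∑ b, f a b := Finset.single_le_sum (f := fun a => ∑ b, f a b)
        (fun a _ => Finset.sum_nonneg fun b _ => hf a b) (Finset.mem_univ a)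

lemma le_sum3 {m n k : ℕ} {f : Fin m → Fin n → Fin k → ℝ} (hf : ∀ a b c, 0 ≤ f a b c)
    (a : Fin m) (b : Fin n) (c : Fin k) : f a b c ≤ ∑ a, ∑ b, ∑ c, f a b c := by
  calc f a b c ≤ ∑ c, f a b c := Finset.single_le_sum (fun c _ => hf a b c) (Finset.mem_univ c)
    _ ≤ ∑ a, ∑ b, ∑ c, f a b c := le_sum2 (f := fun a b => ∑ c, f a b c)
        (fun a b => Finset.sum_nonneg fun c _ => hf a b c) a b

lemma lsum_eq {n m : ℕ} (Q : Fin m → Matrix (Fin n) (Fin n) ℝ)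
    (xv : Fin m → Fin n → ℝ) (y : Fin n → ℝ) (α : Fin m) (i : Fin n) :
    ∑ j, lEnt Q xv α i j * y j
      = (∑ j ∈ Finset.univ \ {i}, Q α j i * xv α j / xv α i) * y i
        - ∑ j ∈ Finset.univ \ {i}, (Q α j i * xv α j / xv α i) * y j := by
  rw [Finset.sum_eq_sum_sdiff_singleton_add (Finset.mem_univ i)
    (f := fun j => lEnt Q xv α i j * y j)]
  have h1 : lEnt Q xv α i i = ∑ j ∈ Finset.univ \ {i}, Q α j i * xv α j / xv α i := by
    rw [lEnt, if_pos rfl, Finset.sum_div]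
  have h2 : ∀ j ∈ Finset.univ \ {i}, lEnt Q xv α i j * y j
      = -((Q α j i * xv α j / xv α i) * y j) := by
    intro j hj
    rw [Finset.mem_sdiff, Finset.mem_singleton] at hj
    rw [lEnt, if_neg (fun h => hj.2 h.symm)]
    ring
  rw [Finset.sum_congr rfl h2, h1, Finset.sum_neg_distrib]
  ring

lemma exists_unif_bound {n m : ℕ} (Q : Fin m → Matrix (Fin n) (Fin n) ℝ)
    (β δ : Fin m → Fin n → ℝ) (p x : ℝ → Fin m → Fin n → ℝ) (T : ℝ) (hT : 0 ≤ T)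
    (hβ : ∀ α i, 0 ≤ β α i) (hδ : ∀ α i, 0 ≤ δ α i)
    (hpc : ∀ α i, ContinuousOn (fun t => p t α i) (Icc 0 T))
    (hxc : ∀ α i, ContinuousOn (fun t => x t α i) (Icc 0 T))
    (hxpos : ∀ t ∈ Icc (0:ℝ) T, ∀ α i, 0 < x t α i) :
    ∃ C : ℝ, 0 ≤ C
      ∧ (∀ t ∈ Icc (0:ℝ) T, ∀ α i j, |Q α j i * x t α j / x t α i| ≤ C)
      ∧ (∀ α i, β α i ≤ C) ∧ (∀ α i, δ α i ≤ C)
      ∧ (∀ t ∈ Icc (0:ℝ) T, ∀ α i, |p t α i| ≤ C) := by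
  set B0 : ℝ := ∑ α : Fin m, ∑ i : Fin n, (β α i + δ α i) with hB0
  set F : ℝ → ℝ := fun t =>
    (∑ α : Fin m, ∑ i : Fin n, ∑ j : Fin n, |Q α j i * x t α j / x t α i|)
    + ((∑ α : Fin m, ∑ i : Fin n, |p t α i|) + B0) with hF
  have hFc : ContinuousOn F (Icc 0 T) := by
    apply ContinuousOn.add
    · apply continuousOn_finset_sum; intro α _
      apply continuousOn_finset_sum; intro i _
      apply continuousOn_finset_sum; intro j _
      apply ContinuousOn.abs
      exact ((continuousOn_const.mul (hxc α j)).div (hxc α i)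
        (fun t ht => (hxpos t ht α i).ne'))
    · apply ContinuousOn.add _ continuousOn_const
      apply continuousOn_finset_sum; intro α _
      apply continuousOn_finset_sum; intro i _
      exact (hpc α i).abs
  obtain ⟨C, hC⟩ := isCompact_Icc.exists_bound_of_continuousOn hFc
  have hFnn : ∀ t, 0 ≤ F t := by
    intro t
    apply add_nonneg
    · exact Finset.sum_nonneg fun α _ => Finset.sum_nonneg fun i _ =>
        Finset.sum_nonneg fun j _ => abs_nonneg _
    · apply add_nonneg
      · exact Finset.sum_nonneg fun α _ => Finset.sum_nonneg fun i _ => abs_nonneg _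
      · exact Finset.sum_nonneg fun α _ => Finset.sum_nonneg fun i _ =>
          add_nonneg (hβ α i) (hδ α i)
  have hFle : ∀ t ∈ Icc (0:ℝ) T, F t ≤ C := by
    intro t ht
    have := hC t ht
    calc F t ≤ |F t| := le_abs_self _
      _ ≤ C := by simpa using this
  have h0mem : (0:ℝ) ∈ Icc (0:ℝ) T := ⟨le_refl _, hT⟩
  refine ⟨C, le_trans (hFnn 0) (hFle 0 h0mem), ?_, ?_, ?_, ?_⟩
  · intro t ht α i j
    have h1 : |Q α j i * x t α j / x t α i|
        ≤ ∑ α : Fin m, ∑ i : Fin n, ∑ j : Fin n, |Q α j i * x t α j / x t α i| :=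
      le_sum3 (f := fun α i j => |Q α j i * x t α j / x t α i|) (fun _ _ _ => abs_nonneg _) α i j
    have h2 : (0:ℝ) ≤ (∑ α : Fin m, ∑ i : Fin n, |p t α i|) + B0 := by
      apply add_nonneg
      · exact Finset.sum_nonneg fun α _ => Finset.sum_nonneg fun i _ => abs_nonneg _
      · exact Finset.sum_nonneg fun α _ => Finset.sum_nonneg fun i _ =>
          add_nonneg (hβ α i) (hδ α i)
    have := hFle t ht
    rw [hF] at this
    linarith
  · intro α i
    have h1 : β α i ≤ B0 := by
      rw [hB0]
      calc β α i ≤ β α i + δ α i := by linarith [hδ α i]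
        _ ≤ _ := le_sum2 (fun a b => add_nonneg (hβ a b) (hδ a b)) α i
    have h2 : (0:ℝ) ≤ (∑ α : Fin m, ∑ i : Fin n, ∑ j : Fin n, |Q α j i * x 0 α j / x 0 α i|)
        + (∑ α : Fin m, ∑ i : Fin n, |p 0 α i|) := by
      apply add_nonneg
      · exact Finset.sum_nonneg fun α _ => Finset.sum_nonneg fun i _ =>
          Finset.sum_nonneg fun j _ => abs_nonneg _
      · exact Finset.sum_nonneg fun α _ => Finset.sum_nonneg fun i _ => abs_nonneg _
    have := hFle 0 h0mem
    rw [hF] at this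
    linarith
  · intro α i
    have h1 : δ α i ≤ B0 := by
      rw [hB0]
      calc δ α i ≤ β α i + δ α i := by linarith [hβ α i]
        _ ≤ _ := le_sum2 (fun a b => add_nonneg (hβ a b) (hδ a b)) α i
    have h2 : (0:ℝ) ≤ (∑ α : Fin m, ∑ i : Fin n, ∑ j : Fin n, |Q α j i * x 0 α j / x 0 α i|)
        + (∑ α : Fin m, ∑ i : Fin n, |p 0 α i|) := by
      apply add_nonneg
      · exact Finset.sum_nonneg fun α _ => Finset.sum_nonneg fun i _ =>
          Finset.sum_nonneg fun j _ => abs_nonneg _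
      · exact Finset.sum_nonneg fun α _ => Finset.sum_nonneg fun i _ => abs_nonneg _
    have := hFle 0 h0mem
    rw [hF] at this
    linarith
  · intro t ht α i
    have h1 : |p t α i| ≤ ∑ α : Fin m, ∑ i : Fin n, |p t α i| :=
      le_sum2 (f := fun α i => |p t α i|) (fun _ _ => abs_nonneg _) α i
    have h2 : (0:ℝ) ≤ ∑ α : Fin m, ∑ i : Fin n, ∑ j : Fin n, |Q α j i * x t α j / x t α i| :=
      Finset.sum_nonneg fun α _ => Finset.sum_nonneg fun i _ =>
        Finset.sum_nonneg fun j _ => abs_nonneg _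
    have h3 : (0:ℝ) ≤ B0 := Finset.sum_nonneg fun α _ => Finset.sum_nonneg fun i _ =>
      add_nonneg (hβ α i) (hδ α i)
    have := hFle t ht
    rw [hF] at this
    linarith

lemma fFrac_nonneg {n m : ℕ} {xv : Fin m → Fin n → ℝ} {σ : Fin m} {i : Fin n}
    (hx : ∀ τ, 0 < xv τ i) : 0 ≤ fFrac xv σ i :=
  div_nonneg (hx σ).le (Finset.sum_nonneg fun τ _ => (hx τ).le)

lemma fFrac_pos {n m : ℕ} {xv : Fin m → Fin n → ℝ} {σ : Fin m} {i : Fin n}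
    (hx : ∀ τ, 0 < xv τ i) : 0 < fFrac xv σ i :=
  div_pos (hx σ) (Finset.sum_pos (fun τ _ => hx τ) ⟨σ, Finset.mem_univ σ⟩)

lemma fFrac_le_one {n m : ℕ} {xv : Fin m → Fin n → ℝ} {σ : Fin m} {i : Fin n}
    (hx : ∀ τ, 0 < xv τ i) : fFrac xv σ i ≤ 1 := by
  rw [fFrac, div_le_one (Finset.sum_pos (fun τ _ => hx τ) ⟨σ, Finset.mem_univ σ⟩)]
  exact Finset.single_le_sum (fun τ _ => (hx τ).le) (Finset.mem_univ σ)

lemma max_neg_le_abs (y : ℝ) : max 0 (-y) ≤ |y| :=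
  max_le (abs_nonneg y) (neg_le_abs y)

set_option maxHeartbeats 1000000 in
lemma p_in_unit {n m : ℕ} (Q : Fin m → Matrix (Fin n) (Fin n) ℝ)
    (hQoff : ∀ (α : Fin m) (i j : Fin n), i ≠ j → 0 ≤ Q α i j)
    (β δ : Fin m → Fin n → ℝ)
    (hβ : ∀ α i, 0 < β α i) (hδ : ∀ α i, 0 ≤ δ α i)
    (p x : ℝ → Fin m → Fin n → ℝ)
    (hxpos : ∀ t, 0 ≤ t → ∀ α i, 0 < x t α i)
    (hp : ∀ (α : Fin m) (i : Fin n) (t : ℝ), 0 ≤ t →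
      HasDerivAt (fun s => p s α i)
        (-(δ α i) * p t α i
          + β α i * (∑ σ, fFrac (x t) σ i * p t σ i) * (1 - p t α i)
          - ∑ j, lEnt Q (x t) α i j * p t α j) t)
    (hpc : ∀ (α : Fin m) (i : Fin n) (T : ℝ), ContinuousOn (fun t => p t α i) (Icc 0 T))
    (hxc : ∀ (α : Fin m) (i : Fin n) (T : ℝ), ContinuousOn (fun t => x t α i) (Icc 0 T))
    (hp0 : ∀ α i, p 0 α i ∈ Set.Icc (0 : ℝ) 1) :
    ∀ T, 0 ≤ T → ∀ α i, p T α i ∈ Set.Icc (0:ℝ) 1 := by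
  intro T hT
  obtain ⟨C, hC0, hCq, hCβ, hCδ, hCp⟩ := exists_unif_bound Q β δ p x T hT
    (fun α i => (hβ α i).le) hδ (fun α i => hpc α i T) (fun α i => hxc α i T)
    (fun t ht => hxpos t ht.1)
  set A : ℝ := C * m * (1 + C) + C * n with hA
  set K : ℝ := (m * n : ℝ) * (4 * A) with hKdef
  set dpe : ℝ → Fin m → Fin n → ℝ := fun t α i =>
    -(δ α i) * p t α i
      + β α i * (∑ σ, fFrac (x t) σ i * p t σ i) * (1 - p t α i)
      - ∑ j, lEnt Q (x t) α i j * p t α j with hdpe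
  have hp' : ∀ (α : Fin m) (i : Fin n) (t : ℝ), 0 ≤ t →
      HasDerivAt (fun s => p s α i) (dpe t α i) t := fun α i t ht => hp α i t ht
  set v : ℝ → ℝ := fun t => ∑ α : Fin m, ∑ i : Fin n,
    ((max 0 (-(p t α i)))^2 + (max 0 (p t α i - 1))^2) with hv
  set v' : ℝ → ℝ := fun t => ∑ α : Fin m, ∑ i : Fin n,
    (2 * max 0 (-(p t α i)) * (-(dpe t α i)) + 2 * max 0 (p t α i - 1) * (dpe t α i)) with hv'
  clear_value A K dpe v v'
  have hvd : ∀ t ∈ Icc (0:ℝ) T, HasDerivAt v (v' t) t := by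
    intro t ht
    rw [hv, hv']
    apply HasDerivAt.fun_sum; intro α _
    apply HasDerivAt.fun_sum; intro i _
    have h1 := (hasDerivAt_maxsq (-(p t α i))).comp t (hp' α i t ht.1).neg
    have h2 := (hasDerivAt_maxsq (p t α i - 1)).comp t ((hp' α i t ht.1).sub_const 1)
    exact h1.add h2
  have hvnn : ∀ t, 0 ≤ v t := by
    intro t
    simp only [hv]
    exact Finset.sum_nonneg fun α _ =>
      Finset.sum_nonneg fun i _ => add_nonneg (by positivity) (by positivity)
  have hsq : ∀ t, ∀ (σ : Fin m) (j : Fin n),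
      (max 0 (-(p t σ j)))^2 ≤ v t ∧ (max 0 (p t σ j - 1))^2 ≤ v t := by
    intro t σ j
    have base : (max 0 (-(p t σ j)))^2 + (max 0 (p t σ j - 1))^2 ≤ v t := by
      simp only [hv]
      exact le_sum2 (f := fun σ j => (max 0 (-(p t σ j)))^2 + (max 0 (p t σ j - 1))^2)
        (fun a b => add_nonneg (by positivity) (by positivity)) σ j
    constructor
    · nlinarith [sq_nonneg (max 0 (p t σ j - 1))]
    · nlinarith [sq_nonneg (max 0 (-(p t σ j)))]
  have hest : ∀ t ∈ Icc (0:ℝ) T, v' t ≤ K * v t := by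
    intro t ht
    have hxp : ∀ α i, 0 < x t α i := hxpos t ht.1
    have claim : ∀ (α : Fin m) (i : Fin n),
        2 * max 0 (-(p t α i)) * (-(dpe t α i)) + 2 * max 0 (p t α i - 1) * (dpe t α i)
          ≤ 4 * A * v t := by
      intro α i
      set uu := max 0 (-(p t α i)) with huu
      set ww := max 0 (p t α i - 1) with hww
      set S := ∑ σ, fFrac (x t) σ i * p t σ i with hSdef
      set Z := ∑ j ∈ Finset.univ \ {i}, (Q α j i * x t α j / x t α i) * p t α j with hZdef
      set csum := ∑ j ∈ Finset.univ \ {i}, Q α j i * x t α j / x t α i with hcsumdef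
      set U := ∑ σ, max 0 (-(p t σ i)) with hUdef
      clear_value uu ww S Z csum U
      have huu0 : 0 ≤ uu := by rw [huu]; exact le_max_left _ _
      have hww0 : 0 ≤ ww := by rw [hww]; exact le_max_left _ _
      have hcsum0 : 0 ≤ csum := by
        rw [hcsumdef]
        apply Finset.sum_nonneg
        intro j hj
        rw [Finset.mem_sdiff, Finset.mem_singleton] at hj
        exact div_nonneg (mul_nonneg (hQoff α j i hj.2) (hxp α j).le) (hxp α i).le
      have hcard : ((Finset.univ \ {i} : Finset (Fin n)).card : ℝ) ≤ (n : ℝ) := by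
        exact_mod_cast le_trans (Finset.card_le_univ _) (le_of_eq (by simp))
      have hccle : ∀ j ∈ Finset.univ \ ({i} : Finset (Fin n)),
          Q α j i * x t α j / x t α i ≤ C ∧ 0 ≤ Q α j i * x t α j / x t α i := by
        intro j hj
        rw [Finset.mem_sdiff, Finset.mem_singleton] at hj
        exact ⟨le_trans (le_abs_self _) (hCq t ht α i j),
          div_nonneg (mul_nonneg (hQoff α j i hj.2) (hxp α j).le) (hxp α i).le⟩
      have hDec : dpe t α i = -(δ α i) * p t α i + β α i * S * (1 - p t α i)
          - csum * p t α i + Z := by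
        rw [hSdef, hZdef, hcsumdef]
        simp only [hdpe]
        rw [lsum_eq Q (x t) (fun j => p t α j) α i]
        ring
      -- S lower bound
      have hSlb : -S ≤ U := by
        rw [hSdef, hUdef, ← Finset.sum_neg_distrib]
        apply Finset.sum_le_sum
        intro σ _
        have hf0 : 0 ≤ fFrac (x t) σ i := fFrac_nonneg (fun τ => hxp τ i)
        have hf1 : fFrac (x t) σ i ≤ 1 := fFrac_le_one (fun τ => hxp τ i)
        have hple : -(p t σ i) ≤ max 0 (-(p t σ i)) := le_max_right _ _
        have hm0 : 0 ≤ max 0 (-(p t σ i)) := le_max_left _ _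
        calc -(fFrac (x t) σ i * p t σ i) = fFrac (x t) σ i * (-(p t σ i)) := by ring
          _ ≤ fFrac (x t) σ i * max 0 (-(p t σ i)) := mul_le_mul_of_nonneg_left hple hf0
          _ ≤ 1 * max 0 (-(p t σ i)) := mul_le_mul_of_nonneg_right hf1 hm0
          _ = max 0 (-(p t σ i)) := one_mul _
      have hU0 : 0 ≤ U := by
        rw [hUdef]; exact Finset.sum_nonneg fun σ _ => le_max_left _ _
      have hUle : U ≤ (m : ℝ) * C := by
        rw [hUdef]
        calc ∑ σ, max 0 (-(p t σ i)) ≤ ∑ σ : Fin m, C := by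
              apply Finset.sum_le_sum
              intro σ _
              exact le_trans (max_neg_le_abs _) (hCp t ht σ i)
          _ = (m : ℝ) * C := by simp [mul_comm]
      -- identities
      have hsqa : uu^2 ≤ v t := by rw [huu]; exact (hsq t α i).1
      have hsqw : ww^2 ≤ v t := by rw [hww]; exact (hsq t α i).2
      have F1 : uu * p t α i = -uu^2 := by rw [huu]; exact max_neg_mul_self _
      have F2 : ww * p t α i = ww + ww^2 := by rw [hww]; exact max_sub_one_mul_self _
      -- Z-type bounds
      have hZlb : -(uu * Z) ≤ (n : ℝ) * (C * v t) := by
        have hZe : -(uu * Z) = ∑ j ∈ Finset.univ \ {i},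
            (Q α j i * x t α j / x t α i) * (uu * -(p t α j)) := by
          rw [hZdef, Finset.mul_sum, ← Finset.sum_neg_distrib]
          apply Finset.sum_congr rfl
          intro j _
          ring
        rw [hZe]
        calc ∑ j ∈ Finset.univ \ {i}, (Q α j i * x t α j / x t α i) * (uu * -(p t α j))
            ≤ ∑ j ∈ Finset.univ \ ({i} : Finset (Fin n)), C * v t := by
              apply Finset.sum_le_sum
              intro j hj
              obtain ⟨hle, h0⟩ := hccle j hj
              have hm0 : (0:ℝ) ≤ max 0 (-(p t α j)) := le_max_left _ _
              have h1 : uu * -(p t α j) ≤ uu * max 0 (-(p t α j)) :=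
                mul_le_mul_of_nonneg_left (le_max_right _ _) huu0
              have h2 : uu * max 0 (-(p t α j)) ≤ v t :=
                mul_le_of_sq_le huu0 hm0 hsqa (hsq t α j).1
              calc (Q α j i * x t α j / x t α i) * (uu * -(p t α j))
                  ≤ (Q α j i * x t α j / x t α i) * (uu * max 0 (-(p t α j))) :=
                    mul_le_mul_of_nonneg_left h1 h0
                _ ≤ C * v t := mul_le_mul hle h2 (mul_nonneg huu0 hm0) hC0
          _ = ((Finset.univ \ ({i} : Finset (Fin n))).card : ℝ) * (C * v t) := by
              rw [Finset.sum_const, nsmul_eq_mul]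
          _ ≤ (n : ℝ) * (C * v t) :=
              mul_le_mul_of_nonneg_right hcard (mul_nonneg hC0 (hvnn t))
      have hWZ : ww * Z - csum * (ww + ww^2) ≤ (n : ℝ) * (C * v t) := by
        have hZe : ww * Z - csum * (ww + ww^2) = ∑ j ∈ Finset.univ \ {i},
            (Q α j i * x t α j / x t α i) * (ww * p t α j - (ww + ww^2)) := by
          rw [hZdef, hcsumdef, Finset.mul_sum, Finset.sum_mul, ← Finset.sum_sub_distrib]
          apply Finset.sum_congr rfl
          intro j _
          ring
        rw [hZe]
        calc ∑ j ∈ Finset.univ \ {i},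
              (Q α j i * x t α j / x t α i) * (ww * p t α j - (ww + ww^2))
            ≤ ∑ j ∈ Finset.univ \ ({i} : Finset (Fin n)), C * v t := by
              apply Finset.sum_le_sum
              intro j hj
              obtain ⟨hle, h0⟩ := hccle j hj
              have hwj0 : (0:ℝ) ≤ max 0 (p t α j - 1) := le_max_left _ _
              have hpj : p t α j ≤ 1 + max 0 (p t α j - 1) := by
                have := le_max_right 0 (p t α j - 1)
                linarith
              have h1 : ww * p t α j - (ww + ww^2) ≤ ww * max 0 (p t α j - 1) := by
                have := mul_le_mul_of_nonneg_left hpj hww0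
                nlinarith [sq_nonneg ww]
              have h2 : ww * max 0 (p t α j - 1) ≤ v t :=
                mul_le_of_sq_le hww0 hwj0 hsqw (hsq t α j).2
              calc (Q α j i * x t α j / x t α i) * (ww * p t α j - (ww + ww^2))
                  ≤ (Q α j i * x t α j / x t α i) * (ww * max 0 (p t α j - 1)) :=
                    mul_le_mul_of_nonneg_left h1 h0
                _ ≤ C * v t := mul_le_mul hle h2 (mul_nonneg hww0 hwj0) hC0
          _ = ((Finset.univ \ ({i} : Finset (Fin n))).card : ℝ) * (C * v t) := by
              rw [Finset.sum_const, nsmul_eq_mul]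
          _ ≤ (n : ℝ) * (C * v t) :=
              mul_le_mul_of_nonneg_right hcard (mul_nonneg hC0 (hvnn t))
      -- expansions
      have hE1 : uu * -(dpe t α i) = δ α i * (-(uu^2)) + (β α i * (uu + uu^2)) * (-S)
          + csum * (-(uu^2)) + (-(uu * Z)) := by
        rw [hDec]
        linear_combination (δ α i + β α i * S + csum) * F1
      have hE2 : ww * (dpe t α i) = δ α i * (-(ww + ww^2)) + (β α i * ww^2) * (-S)
          + (ww * Z - csum * (ww + ww^2)) := by
        rw [hDec]
        linear_combination (-(δ α i + β α i * S + csum)) * F2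
      -- bounds
      have b1 : δ α i * (-(uu^2)) ≤ 0 := mul_nonpos_iff.mpr (Or.inl ⟨hδ α i, neg_nonpos.mpr (sq_nonneg uu)⟩)
      have b3 : csum * (-(uu^2)) ≤ 0 := mul_nonpos_iff.mpr (Or.inl ⟨hcsum0, neg_nonpos.mpr (sq_nonneg uu)⟩)
      have hb2a : (uu + uu^2) * U ≤ (m : ℝ) * v t + (m : ℝ) * C * v t := by
        have huuU : uu * U ≤ (m : ℝ) * v t := by
          rw [hUdef, Finset.mul_sum]
          calc ∑ σ, uu * max 0 (-(p t σ i)) ≤ ∑ σ : Fin m, v t := by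
                apply Finset.sum_le_sum
                intro σ _
                exact mul_le_of_sq_le huu0 (le_max_left _ _) hsqa (hsq t σ i).1
            _ = (m : ℝ) * v t := by simp [mul_comm]
        have huu2U : uu^2 * U ≤ (m : ℝ) * C * v t := by
          calc uu^2 * U ≤ uu^2 * ((m : ℝ) * C) :=
                mul_le_mul_of_nonneg_left hUle (sq_nonneg uu)
            _ = ((m : ℝ) * C) * uu^2 := by ring
            _ ≤ ((m : ℝ) * C) * v t := by
                apply mul_le_mul_of_nonneg_left hsqa
                positivity
            _ = (m : ℝ) * C * v t := by ring
        have e : (uu + uu^2) * U = uu * U + uu^2 * U := by ring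
        linarith [huuU, huu2U]
      have b2 : (β α i * (uu + uu^2)) * (-S) ≤ C * ((m : ℝ) * v t + (m : ℝ) * C * v t) := by
        have hnn : 0 ≤ uu + uu^2 := by positivity
        have h1 : (β α i * (uu + uu^2)) * (-S) ≤ (β α i * (uu + uu^2)) * U :=
          mul_le_mul_of_nonneg_left hSlb (mul_nonneg (hβ α i).le hnn)
        have h2 : (β α i * (uu + uu^2)) * U = β α i * ((uu + uu^2) * U) := by ring
        have h3 : β α i * ((uu + uu^2) * U) ≤ C * ((uu + uu^2) * U) :=
          mul_le_mul_of_nonneg_right (hCβ α i) (mul_nonneg hnn hU0)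
        have h4 : C * ((uu + uu^2) * U) ≤ C * ((m : ℝ) * v t + (m : ℝ) * C * v t) :=
          mul_le_mul_of_nonneg_left hb2a hC0
        linarith
      have b1' : δ α i * (-(ww + ww^2)) ≤ 0 := mul_nonpos_iff.mpr (Or.inl ⟨hδ α i, neg_nonpos.mpr (by positivity)⟩)
      have b2' : (β α i * ww^2) * (-S) ≤ C * ((m : ℝ) * C * v t) := by
        have h1 : (β α i * ww^2) * (-S) ≤ (β α i * ww^2) * U :=
          mul_le_mul_of_nonneg_left hSlb (mul_nonneg (hβ α i).le (sq_nonneg ww))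
        have h2 : (β α i * ww^2) * U ≤ (C * ww^2) * U := by
          apply mul_le_mul_of_nonneg_right _ hU0
          exact mul_le_mul_of_nonneg_right (hCβ α i) (sq_nonneg ww)
        have h3 : (C * ww^2) * U ≤ (C * v t) * U := by
          apply mul_le_mul_of_nonneg_right _ hU0
          exact mul_le_mul_of_nonneg_left hsqw hC0
        have h4 : (C * v t) * U ≤ (C * v t) * ((m:ℝ) * C) :=
          mul_le_mul_of_nonneg_left hUle (mul_nonneg hC0 (hvnn t))
        have e : (C * v t) * ((m:ℝ) * C) = C * ((m:ℝ) * C * v t) := by ring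
        linarith [h1, h2, h3, h4, e]
      have hAv : A * v t = C * ((m : ℝ) * v t + (m : ℝ) * C * v t) + (n : ℝ) * (C * v t) := by
        rw [hA]; ring
      have hCmv : 0 ≤ C * ((m : ℝ) * v t) := by
        apply mul_nonneg hC0
        exact mul_nonneg (Nat.cast_nonneg m) (hvnn t)
      have c1 : uu * -(dpe t α i) ≤ A * v t := by
        rw [hE1, hAv]; linarith
      have c2 : ww * (dpe t α i) ≤ A * v t := by
        rw [hE2, hAv]; linarith [b1', b2', hWZ, hCmv]
      linarith [c1, c2]
    simp only [hv']
    calc ∑ α : Fin m, ∑ i : Fin n,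
          (2 * max 0 (-(p t α i)) * (-(dpe t α i)) + 2 * max 0 (p t α i - 1) * (dpe t α i))
        ≤ ∑ _α : Fin m, ∑ _i : Fin n, 4 * A * v t := by
          apply Finset.sum_le_sum; intro α _
          apply Finset.sum_le_sum; intro i _
          exact claim α i
      _ = (m : ℝ) * ((n : ℝ) * (4 * A * v t)) := by
          simp [Finset.sum_const, Finset.card_univ, mul_comm, nsmul_eq_mul]
      _ = K * v t := by rw [hKdef]; ring
  have hv0 : v 0 = 0 := by
    simp only [hv]
    apply Finset.sum_eq_zero; intro α _
    apply Finset.sum_eq_zero; intro i _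
    obtain ⟨h0, h1⟩ := hp0 α i
    rw [max_eq_left (by linarith), max_eq_left (by linarith)]
    norm_num
  have hfin := le_exp_mul_of_deriv_le hT hvd hest
  rw [hv0, mul_zero] at hfin
  have hvT : v T = 0 := le_antisymm hfin (hvnn T)
  intro α i
  have hb := hsq T α i
  rw [hvT] at hb
  have h1 : max 0 (-(p T α i)) = 0 := by
    have := hb.1
    have h0 : (0:ℝ) ≤ max 0 (-(p T α i)) := le_max_left _ _
    nlinarith
  have h2 : max 0 (p T α i - 1) = 0 := by
    have := hb.2
    have h0 : (0:ℝ) ≤ max 0 (p T α i - 1) := le_max_left _ _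
    nlinarith
  constructor
  · have := le_max_right 0 (-(p T α i))
    rw [h1] at this
    linarith
  · have := le_max_right 0 (p T α i - 1)
    rw [h2] at this
    linarith


/-- For the SIS model with multi-layer population dispersal, if
`p^α_i(0) ∈ [0,1]` for all `i, α` and `p(0)` is not identically zero, then
`p^α_i(t) > 0` for every `i`, `α` and every `t > 0`. -/
theorem sis_multilayer_eventually_positive
    {n m : ℕ} (hn : 2 ≤ n) (hm : 1 ≤ m)
    (Q : Fin m → Matrix (Fin n) (Fin n) ℝ)
    (hQoff : ∀ (α : Fin m) (i j : Fin n), i ≠ j → 0 ≤ Q α i j)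
    (hQdiag : ∀ (α : Fin m) (i : Fin n), Q α i i = -∑ j ∈ Finset.univ \ {i}, Q α i j)
    (hQirr : ∀ (α : Fin m) (i j : Fin n),
      Relation.ReflTransGen (fun a b => 0 < Q α a b) i j)
    (β δ : Fin m → Fin n → ℝ)
    (hβ : ∀ α i, 0 < β α i) (hδ : ∀ α i, 0 ≤ δ α i)
    (hδpos : ∀ α, ∃ k, 0 < δ α k)
    (p x : ℝ → Fin m → Fin n → ℝ)
    (hx0 : ∀ α i, 0 < x 0 α i)
    (hx : ∀ (α : Fin m) (i : Fin n) (t : ℝ), 0 ≤ t →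
      HasDerivAt (fun s => x s α i) (∑ j, Q α j i * x t α j) t)
    (hp : ∀ (α : Fin m) (i : Fin n) (t : ℝ), 0 ≤ t →
      HasDerivAt (fun s => p s α i)
        (-(δ α i) * p t α i
          + β α i * (∑ σ, fFrac (x t) σ i * p t σ i) * (1 - p t α i)
          - ∑ j, lEnt Q (x t) α i j * p t α j) t)
    (hp0 : ∀ α i, p 0 α i ∈ Set.Icc (0 : ℝ) 1)
    (hp0ne : ∃ (σ : Fin m) (j : Fin n), 0 < p 0 σ j) :
    ∀ (α : Fin m) (i : Fin n) (t : ℝ), 0 < t → 0 < p t α i := by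
  have hxpos := x_positive Q hQoff x hx0 hx
  have hpc : ∀ (α : Fin m) (i : Fin n) (T : ℝ),
      ContinuousOn (fun s => p s α i) (Set.Icc 0 T) :=
    fun α i T s hs => ((hp α i s hs.1).continuousAt).continuousWithinAt
  have hxc : ∀ (α : Fin m) (i : Fin n) (T : ℝ),
      ContinuousOn (fun s => x s α i) (Set.Icc 0 T) :=
    fun α i T s hs => ((hx α i s hs.1).continuousAt).continuousWithinAt
  have h01 := p_in_unit Q hQoff β δ hβ hδ p x hxpos hp hpc hxc hp0
  obtain ⟨σ₀, j₀, hpos0⟩ := hp0ne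
  have hdec : ∀ (α : Fin m) (i : Fin n) (s : ℝ),
      (-(δ α i) * p s α i + β α i * (∑ σ, fFrac (x s) σ i * p s σ i) * (1 - p s α i)
        - ∑ j, lEnt Q (x s) α i j * p s α j)
      = -(δ α i) * p s α i + β α i * (∑ σ, fFrac (x s) σ i * p s σ i) * (1 - p s α i)
        - (∑ j ∈ Finset.univ \ {i}, Q α j i * x s α j / x s α i) * p s α i
        + ∑ j ∈ Finset.univ \ {i}, (Q α j i * x s α j / x s α i) * p s α j := by
    intro α i s
    rw [lsum_eq Q (x s) (fun j => p s α j) α i]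
    ring
  have hSnn : ∀ (α : Fin m) (i : Fin n) (s : ℝ), 0 ≤ s →
      0 ≤ ∑ σ, fFrac (x s) σ i * p s σ i := by
    intro α i s hs
    exact Finset.sum_nonneg fun σ _ =>
      mul_nonneg (fFrac_nonneg (fun τ => hxpos s hs τ i)) (h01 s hs σ i).1
  have hBnn : ∀ (α : Fin m) (i : Fin n) (s : ℝ), 0 ≤ s →
      0 ≤ β α i * (∑ σ, fFrac (x s) σ i * p s σ i) * (1 - p s α i) := by
    intro α i s hs
    have h2 := (h01 s hs α i).2
    exact mul_nonneg (mul_nonneg (hβ α i).le (hSnn α i s hs)) (by linarith)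
  have hccnn : ∀ (α : Fin m) (i : Fin n) (s : ℝ), 0 ≤ s →
      ∀ j ∈ Finset.univ \ ({i} : Finset (Fin n)), 0 ≤ Q α j i * x s α j / x s α i := by
    intro α i s hs j hj
    rw [Finset.mem_sdiff, Finset.mem_singleton] at hj
    exact div_nonneg (mul_nonneg (hQoff α j i hj.2) (hxpos s hs α j).le) (hxpos s hs α i).le
  have hZnn : ∀ (α : Fin m) (i : Fin n) (s : ℝ), 0 ≤ s →
      0 ≤ ∑ j ∈ Finset.univ \ {i}, (Q α j i * x s α j / x s α i) * p s α j := by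
    intro α i s hs
    apply Finset.sum_nonneg
    intro j hj
    exact mul_nonneg (hccnn α i s hs j hj) (h01 s hs α j).1
  have hcsle : ∀ (α : Fin m) (i : Fin n) (b C : ℝ),
      (∀ r ∈ Set.Icc (0:ℝ) b, ∀ (α : Fin m) (i j : Fin n), |Q α j i * x r α j / x r α i| ≤ C) →
      ∀ s ∈ Set.Icc (0:ℝ) b,
        (∑ j ∈ Finset.univ \ {i}, Q α j i * x s α j / x s α i) ≤ (n:ℝ) * C := by
    intro α i b C hC s hs
    have hC0 : 0 ≤ C := le_trans (abs_nonneg _) (hC s hs α i i)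
    have hcard : ((Finset.univ \ {i} : Finset (Fin n)).card : ℝ) ≤ (n : ℝ) := by
      exact_mod_cast le_trans (Finset.card_le_univ _) (le_of_eq (by simp))
    calc ∑ j ∈ Finset.univ \ {i}, Q α j i * x s α j / x s α i
        ≤ ∑ j ∈ Finset.univ \ ({i} : Finset (Fin n)), C :=
          Finset.sum_le_sum fun j _ => le_trans (le_abs_self _) (hC s hs α i j)
      _ = ((Finset.univ \ ({i} : Finset (Fin n))).card : ℝ) * C := by
          rw [Finset.sum_const, nsmul_eq_mul]
      _ ≤ (n:ℝ) * C := mul_le_mul_of_nonneg_right hcard hC0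
  -- persistence
  have persist : ∀ (α : Fin m) (i : Fin n) (a b : ℝ), 0 ≤ a → a ≤ b →
      0 < p a α i → 0 < p b α i := by
    intro α i a b ha hab hpa
    rcases eq_or_lt_of_le hab with rfl | hlt
    · exact hpa
    have hb : (0:ℝ) ≤ b := le_trans ha hab
    obtain ⟨C, hC0, hCq, hCβ, hCδ, hCp⟩ := exists_unif_bound Q β δ p x b hb
      (fun α i => (hβ α i).le) hδ (fun α i => hpc α i b) (fun α i => hxc α i b)
      (fun r hr => hxpos r hr.1)
    have hsub : Set.Icc a b ⊆ Set.Icc 0 b := fun r hr => ⟨le_trans ha hr.1, hr.2⟩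
    have hge : ∀ s ∈ Set.Icc a b, -(C + (n:ℝ)*C) * p s α i ≤
        (-(δ α i) * p s α i + β α i * (∑ σ, fFrac (x s) σ i * p s σ i) * (1 - p s α i)
          - ∑ j, lEnt Q (x s) α i j * p s α j) := by
      intro s hs
      have hs0 : (0:ℝ) ≤ s := le_trans ha hs.1
      rw [hdec α i s]
      have h1 := hBnn α i s hs0
      have h2 := hZnn α i s hs0
      have h3 := hcsle α i b C hCq s (hsub hs)
      have h4 := hCδ α i
      have h5 := (h01 s hs0 α i).1
      have h6 : 0 ≤ (C + (n:ℝ)*C - δ α i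
          - ∑ j ∈ Finset.univ \ {i}, Q α j i * x s α j / x s α i) * p s α i :=
        mul_nonneg (by linarith) h5
      linarith [h6]
    have := exp_mul_le_of_deriv_ge hab (fun s hs => hp α i s (le_trans ha hs.1)) hge
    nlinarith [Real.exp_pos (-(C + (n:ℝ)*C) * (b - a)), this]
  have hA0 : ∀ s, 0 ≤ s → 0 < p s σ₀ j₀ := fun s hs => persist σ₀ j₀ 0 s le_rfl hs hpos0
  -- spread within node j₀ to any layer
  have hnode : ∀ (αa : Fin m) (b : ℝ), 0 < b → 0 < p b αa j₀ := by
    intro αa b hb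
    obtain ⟨C, hC0, hCq, hCβ, hCδ, hCp⟩ := exists_unif_bound Q β δ p x b hb.le
      (fun α i => (hβ α i).le) hδ (fun α i => hpc α i b) (fun α i => hxc α i b)
      (fun r hr => hxpos r hr.1)
    have hge : ∀ s ∈ Set.Icc (0:ℝ) b,
        -(C + (n:ℝ)*C) * p s αa j₀
          + β αa j₀ * (fFrac (x s) σ₀ j₀ * p s σ₀ j₀) * (1 - p s αa j₀) ≤
        (-(δ αa j₀) * p s αa j₀
          + β αa j₀ * (∑ σ, fFrac (x s) σ j₀ * p s σ j₀) * (1 - p s αa j₀)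
          - ∑ j, lEnt Q (x s) αa j₀ j * p s αa j) := by
      intro s hs
      rw [hdec αa j₀ s]
      have h1 := hZnn αa j₀ s hs.1
      have h3 := hcsle αa j₀ b C hCq s hs
      have h4 := hCδ αa j₀
      have h5 := (h01 s hs.1 αa j₀).1
      have h6 : 0 ≤ (C + (n:ℝ)*C - δ αa j₀
          - ∑ j ∈ Finset.univ \ {j₀}, Q αa j j₀ * x s αa j / x s αa j₀) * p s αa j₀ :=
        mul_nonneg (by linarith) h5
      -- B ≥ h
      have hS1 : fFrac (x s) σ₀ j₀ * p s σ₀ j₀ ≤ ∑ σ, fFrac (x s) σ j₀ * p s σ j₀ :=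
        Finset.single_le_sum (f := fun σ => fFrac (x s) σ j₀ * p s σ j₀)
          (fun σ _ => mul_nonneg (fFrac_nonneg (fun τ => hxpos s hs.1 τ j₀))
            (h01 s hs.1 σ j₀).1) (Finset.mem_univ σ₀)
      have h7 := (h01 s hs.1 αa j₀).2
      have hBh : β αa j₀ * (fFrac (x s) σ₀ j₀ * p s σ₀ j₀) * (1 - p s αa j₀)
          ≤ β αa j₀ * (∑ σ, fFrac (x s) σ j₀ * p s σ j₀) * (1 - p s αa j₀) := by
        apply mul_le_mul_of_nonneg_right _ (by linarith)
        exact mul_le_mul_of_nonneg_left hS1 (hβ αa j₀).le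
      linarith [h6, h1, hBh]
    have hh : ∀ s ∈ Set.Icc (0:ℝ) b,
        0 ≤ β αa j₀ * (fFrac (x s) σ₀ j₀ * p s σ₀ j₀) * (1 - p s αa j₀) := by
      intro s hs
      have h7 := (h01 s hs.1 αa j₀).2
      exact mul_nonneg (mul_nonneg (hβ αa j₀).le
        (mul_nonneg (fFrac_nonneg (fun τ => hxpos s hs.1 τ j₀)) (h01 s hs.1 σ₀ j₀).1))
        (by linarith)
    have hcrit : ∀ s ∈ Set.Ioo (0:ℝ) b, p s αa j₀ = 0 →
        0 < β αa j₀ * (fFrac (x s) σ₀ j₀ * p s σ₀ j₀) * (1 - p s αa j₀) := by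
      intro s hs hzero
      rw [hzero]
      have : (0:ℝ) < 1 - 0 := by norm_num
      exact mul_pos (mul_pos (hβ αa j₀)
        (mul_pos (fFrac_pos (fun τ => hxpos s hs.1.le τ j₀)) (hA0 s hs.1.le))) this
    exact pos_of_deriv_ge_source hb (fun s hs => hp αa j₀ s hs.1) hge hh
      (h01 0 le_rfl αa j₀).1 hcrit
  -- spread along an edge
  have hedge : ∀ (αa : Fin m) (jj ii : Fin n), 0 < Q αa jj ii →
      (∀ s, 0 < s → 0 < p s αa jj) → ∀ b, 0 < b → 0 < p b αa ii := by
    intro αa jj ii hQpos hjj b hb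
    have hne : jj ≠ ii := by
      rintro rfl
      have hdg := hQdiag αa jj
      have hnn : 0 ≤ ∑ j ∈ Finset.univ \ {jj}, Q αa jj j := by
        apply Finset.sum_nonneg
        intro k hk
        rw [Finset.mem_sdiff, Finset.mem_singleton] at hk
        exact hQoff αa jj k (fun h => hk.2 h.symm)
      rw [hdg] at hQpos
      linarith
    have hjjmem : jj ∈ Finset.univ \ ({ii} : Finset (Fin n)) := by
      rw [Finset.mem_sdiff, Finset.mem_singleton]
      exact ⟨Finset.mem_univ jj, hne⟩
    obtain ⟨C, hC0, hCq, hCβ, hCδ, hCp⟩ := exists_unif_bound Q β δ p x b hb.le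
      (fun α i => (hβ α i).le) hδ (fun α i => hpc α i b) (fun α i => hxc α i b)
      (fun r hr => hxpos r hr.1)
    have hge : ∀ s ∈ Set.Icc (0:ℝ) b,
        -(C + (n:ℝ)*C) * p s αa ii
          + (Q αa jj ii * x s αa jj / x s αa ii) * p s αa jj ≤
        (-(δ αa ii) * p s αa ii
          + β αa ii * (∑ σ, fFrac (x s) σ ii * p s σ ii) * (1 - p s αa ii)
          - ∑ j, lEnt Q (x s) αa ii j * p s αa j) := by
      intro s hs
      rw [hdec αa ii s]
      have h1 := hBnn αa ii s hs.1
      have h3 := hcsle αa ii b C hCq s hs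
      have h4 := hCδ αa ii
      have h5 := (h01 s hs.1 αa ii).1
      have h6 : 0 ≤ (C + (n:ℝ)*C - δ αa ii
          - ∑ j ∈ Finset.univ \ {ii}, Q αa j ii * x s αa j / x s αa ii) * p s αa ii :=
        mul_nonneg (by linarith) h5
      have hZ1 : (Q αa jj ii * x s αa jj / x s αa ii) * p s αa jj
          ≤ ∑ j ∈ Finset.univ \ {ii}, (Q αa j ii * x s αa j / x s αa ii) * p s αa j :=
        Finset.single_le_sum (f := fun j => (Q αa j ii * x s αa j / x s αa ii) * p s αa j)
          (fun j hj => mul_nonneg (hccnn αa ii s hs.1 j hj) (h01 s hs.1 αa j).1) hjjmem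
      linarith [h6, h1, hZ1]
    have hh : ∀ s ∈ Set.Icc (0:ℝ) b,
        0 ≤ (Q αa jj ii * x s αa jj / x s αa ii) * p s αa jj := by
      intro s hs
      exact mul_nonneg (hccnn αa ii s hs.1 jj hjjmem) (h01 s hs.1 αa jj).1
    have hcrit : ∀ s ∈ Set.Ioo (0:ℝ) b, p s αa ii = 0 →
        0 < (Q αa jj ii * x s αa jj / x s αa ii) * p s αa jj := by
      intro s hs _
      exact mul_pos (div_pos (mul_pos hQpos (hxpos s hs.1.le αa jj))
        (hxpos s hs.1.le αa ii)) (hjj s hs.1)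
    exact pos_of_deriv_ge_source hb (fun s hs => hp αa ii s hs.1) hge hh
      (h01 0 le_rfl αa ii).1 hcrit
  intro α i t ht
  have key : ∀ ii : Fin n, Relation.ReflTransGen (fun a b => 0 < Q α a b) j₀ ii →
      ∀ s, 0 < s → 0 < p s α ii := by
    intro ii hrel
    induction hrel with
    | refl => exact fun s hs => hnode α s hs
    | tail _ hbc ih => exact hedge α _ _ hbc ih
  exact key i (hQirr α j₀ i) t ht
end

section
/- There exists a vector p* ∈ ℝ^{nm} that is entrywise positive and satisfies the endemic equilibrium equation (B F* − D − L*) p* − diag(p*) B F* p* = 0 if and only if the spectral abscissa satisfies μ(B F* − D − L*) > 0. -/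
open Matrix BigOperators Finset

/-- Spectral abscissa of a real square matrix: the maximum of the real parts of its
(complex) eigenvalues. -/
noncomputable def specAbscissa {k : Type*} [Fintype k] [DecidableEq k]
    (M : Matrix k k ℝ) : ℝ :=
  sSup {r : ℝ | ∃ z ∈ spectrum ℂ (M.map Complex.ofReal), z.re = r}

/-- Diagonal `nm × nm` matrix (indexed by pairs `(α, i)`) built from rates `c^α_i`. -/
noncomputable def pairDiag {n m : ℕ} (c : Fin m → Fin n → ℝ) :
    Matrix (Fin m × Fin n) (Fin m × Fin n) ℝ :=
  Matrix.diagonal fun q => c q.1 q.2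

/-- The equilibrium dispersal Laplacian `L*`: block-diagonal, whose `α`-th `n × n` block
has `(i,i)` entry `ν^α_i = ∑_{j ≠ i} q^α_{ij}` and `(i,j)` entry `-q^α_{ji} π^α_j / π^α_i`
for `j ≠ i`. -/
noncomputable def Lstar {n m : ℕ} (Q : Fin m → Matrix (Fin n) (Fin n) ℝ)
    (piv : Fin m → Fin n → ℝ) : Matrix (Fin m × Fin n) (Fin m × Fin n) ℝ :=
  Matrix.of fun q q' =>
    if q.1 = q'.1 then
      (if q.2 = q'.2 then ∑ j ∈ Finset.univ \ {q.2}, Q q.1 q.2 j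
       else -(Q q.1 q'.2 q.2 * piv q.1 q'.2 / piv q.1 q.2))
    else 0

/-- The equilibrium population-fraction matrix `F*`: the `(α,σ)` block is the diagonal
matrix with entries `f^{*σ}_i = N^σ π^σ_i / ∑_τ N^τ π^τ_i` (the same row of blocks
repeated for every `α`). -/
noncomputable def Fstar {n m : ℕ} (N : Fin m → ℝ) (piv : Fin m → Fin n → ℝ) :
    Matrix (Fin m × Fin n) (Fin m × Fin n) ℝ :=
  Matrix.of fun q q' =>
    if q.2 = q'.2 then N q'.1 * piv q'.1 q.2 / ∑ τ, N τ * piv τ q.2 else 0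

set_option linter.unusedSectionVars false

open scoped NNReal ENNReal Pointwise
open Topology

namespace PFAux

variable {K : Type*} [Fintype K] [DecidableEq K]

/-- entrywise nonneg is preserved by products -/
lemma mul_nonneg_entries {P R : Matrix K K ℝ} (hP : ∀ i j, 0 ≤ P i j)
    (hR : ∀ i j, 0 ≤ R i j) : ∀ i j, 0 ≤ (P * R) i j := by
  intro i j
  rw [Matrix.mul_apply]
  exact Finset.sum_nonneg fun k _ => mul_nonneg (hP i k) (hR k j)

lemma pow_nonneg_entries {P : Matrix K K ℝ} (hP : ∀ i j, 0 ≤ P i j) :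
    ∀ k : ℕ, ∀ i j, 0 ≤ (P ^ k) i j := by
  intro k
  induction k with
  | zero => intro i j; by_cases h : i = j <;> simp [pow_zero, Matrix.one_apply, h]
  | succ k ih =>
    rw [pow_succ]
    exact mul_nonneg_entries ih hP

lemma mulVec_nonneg {P : Matrix K K ℝ} (hP : ∀ i j, 0 ≤ P i j) {v : K → ℝ}
    (hv : ∀ i, 0 ≤ v i) : ∀ i, 0 ≤ P.mulVec v i := by
  intro i
  exact Finset.sum_nonneg fun j _ => mul_nonneg (hP i j) (hv j)

lemma mulVec_mono {P : Matrix K K ℝ} (hP : ∀ i j, 0 ≤ P i j) {v w : K → ℝ}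
    (hvw : ∀ i, v i ≤ w i) : ∀ i, P.mulVec v i ≤ P.mulVec w i := by
  intro i
  exact Finset.sum_le_sum fun j _ => mul_le_mul_of_nonneg_left (hvw j) (hP i j)

/-- a path in the positivity graph gives a positive entry of a power -/
lemma exists_pow_pos {P : Matrix K K ℝ} (hP : ∀ i j, 0 ≤ P i j) {i j : K}
    (h : Relation.ReflTransGen (fun a b => 0 < P a b) i j) :
    ∃ k : ℕ, 0 < (P ^ k) i j := by
  induction h with
  | refl => exact ⟨0, by simp [Matrix.one_apply]⟩
  | @tail b c hb hbc ih =>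
    obtain ⟨k, hk⟩ := ih
    refine ⟨k + 1, ?_⟩
    rw [pow_succ, Matrix.mul_apply]
    have : 0 < (P ^ k) i b * P b c := mul_pos hk hbc
    refine lt_of_lt_of_le this ?_
    exact Finset.single_le_sum
      (fun x _ => mul_nonneg (pow_nonneg_entries hP k i x) (hP x c)) (Finset.mem_univ b)

lemma one_add_nonneg {P : Matrix K K ℝ} (hP : ∀ i j, 0 ≤ P i j) :
    ∀ i j, 0 ≤ (1 + P) i j := by
  intro i j
  have : (0:ℝ) ≤ (1 : Matrix K K ℝ) i j := by
    by_cases h : i = j <;> simp [Matrix.one_apply, h]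
  simpa [Matrix.add_apply] using add_nonneg this (hP i j)

lemma pow_le_one_add_pow {P : Matrix K K ℝ} (hP : ∀ i j, 0 ≤ P i j) :
    ∀ k : ℕ, ∀ i j, (P ^ k) i j ≤ ((1 + P) ^ k) i j := by
  intro k
  induction k with
  | zero => intro i j; simp
  | succ k ih =>
    intro i j
    rw [pow_succ, pow_succ, Matrix.mul_apply, Matrix.mul_apply]
    refine Finset.sum_le_sum fun c _ => ?_
    have h1 : (P ^ k) i c ≤ ((1 + P) ^ k) i c := ih i c
    have h2 : P c j ≤ (1 + P) c j := by
      have : (0:ℝ) ≤ (1 : Matrix K K ℝ) c j := by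
        by_cases h : c = j <;> simp [Matrix.one_apply, h]
      simp only [Matrix.add_apply]; linarith
    exact mul_le_mul h1 h2 (hP c j) (pow_nonneg_entries (one_add_nonneg hP) k i c)

lemma one_add_pow_mono {P : Matrix K K ℝ} (hP : ∀ i j, 0 ≤ P i j) {k N : ℕ} (hkN : k ≤ N) :
    ∀ i j, ((1 + P) ^ k) i j ≤ ((1 + P) ^ N) i j := by
  induction hkN with
  | refl => intro i j; exact le_rfl
  | @step N _ ih =>
    intro i j
    refine (ih i j).trans ?_
    rw [pow_succ, Matrix.mul_apply]
    have hjj : (1:ℝ) ≤ (1 + P) j j := by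
      have := hP j j
      simp only [Matrix.add_apply, Matrix.one_apply_eq]; linarith
    calc ((1 + P) ^ N) i j = ((1 + P) ^ N) i j * 1 := by ring
    _ ≤ ((1 + P) ^ N) i j * (1 + P) j j :=
        mul_le_mul_of_nonneg_left hjj (pow_nonneg_entries (one_add_nonneg hP) N i j)
    _ ≤ _ := Finset.single_le_sum (f := fun c => ((1 + P) ^ N) i c * (1 + P) c j)
        (fun c _ => mul_nonneg (pow_nonneg_entries (one_add_nonneg hP) N i c)
          (one_add_nonneg hP c j)) (Finset.mem_univ j)

lemma one_add_pow_pos {P : Matrix K K ℝ} (hP : ∀ i j, 0 ≤ P i j) {i j : K} {k N : ℕ}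
    (hk : 0 < (P ^ k) i j) (hkN : k ≤ N) : 0 < ((1 + P) ^ N) i j :=
  lt_of_lt_of_le (lt_of_lt_of_le hk (pow_le_one_add_pow hP k i j)) (one_add_pow_mono hP hkN i j)

/-- A single power of `1 + P` with all entries positive, from irreducibility. -/
lemma exists_one_add_pow_pos [Nonempty K] {P : Matrix K K ℝ} (hP : ∀ i j, 0 ≤ P i j)
    (hirr : ∀ i j, Relation.ReflTransGen (fun a b => 0 < P a b) i j) :
    ∃ N : ℕ, ∀ i j, 0 < ((1 + P) ^ N) i j := by
  have hch : ∀ p : K × K, ∃ k : ℕ, 0 < (P ^ k) p.1 p.2 :=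
    fun p => exists_pow_pos hP (hirr p.1 p.2)
  choose f hf using hch
  refine ⟨Finset.univ.sup f, fun i j => ?_⟩
  exact one_add_pow_pos hP (hf (i, j)) (Finset.le_sup (Finset.mem_univ (i, j)))


section Norm
attribute [local instance] Matrix.linftyOpNormedRing Matrix.linftyOpNormedAlgebra
variable [Nonempty K]

noncomputable instance : CompleteSpace (Matrix K K ℂ) := FiniteDimensional.complete ℂ _

lemma map_pow_ofReal (P : Matrix K K ℝ) (k : ℕ) :
    (P.map Complex.ofReal) ^ k = (P ^ k).map Complex.ofReal := by
  induction k with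
  | zero => simp [Matrix.map_one Complex.ofReal Complex.ofReal_zero Complex.ofReal_one]
  | succ k ih =>
    rw [pow_succ, pow_succ, ih]
    have : Complex.ofReal = ⇑Complex.ofRealHom := rfl
    rw [this, ← Matrix.map_mul]

lemma row_sum_le_norm (A : Matrix K K ℂ) (i : K) : ∑ j, ‖A i j‖ ≤ ‖A‖ := by
  rw [Matrix.linfty_opNorm_def]
  have h1 : ∑ j, ‖A i j‖ = ((∑ j, ‖A i j‖₊ : ℝ≥0) : ℝ) := by
    rw [NNReal.coe_sum]
    exact Finset.sum_congr rfl fun j _ => (coe_nnnorm (A i j)).symm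
  rw [h1, NNReal.coe_le_coe]
  exact Finset.le_sup (f := fun i => ∑ j, ‖A i j‖₊) (Finset.mem_univ i)

lemma spectralRadius_lb {P : Matrix K K ℝ} (hP : ∀ i j, 0 ≤ P i j)
    {v : K → ℝ} (hv : ∀ i, 0 < v i) {c : ℝ} (hc : 0 ≤ c)
    (hle : ∀ i, c * v i ≤ P.mulVec v i) :
    ENNReal.ofReal c ≤ spectralRadius ℂ (P.map Complex.ofReal) := by
  classical
  -- iterate the inequality
  have hiter : ∀ k : ℕ, ∀ i, c ^ k * v i ≤ (P ^ k).mulVec v i := by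
    intro k
    induction k with
    | zero => intro i; simp [Matrix.one_mulVec]
    | succ k ih =>
      intro i
      have h1 : ∀ j, c * v j ≤ P.mulVec v j := hle
      have h2 : (P ^ (k + 1)).mulVec v = (P ^ k).mulVec (P.mulVec v) := by
        rw [pow_succ, ← Matrix.mulVec_mulVec]
      rw [h2]
      have h3 : (P ^ k).mulVec (fun j => c * v j) i ≤ (P ^ k).mulVec (P.mulVec v) i :=
        mulVec_mono (pow_nonneg_entries hP k) h1 i
      have h4 : (P ^ k).mulVec (fun j => c * v j) i = c * (P ^ k).mulVec v i := by
        simp [Matrix.mulVec, dotProduct, Finset.mul_sum]; ring_nf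
        exact Finset.sum_congr rfl fun j _ => by ring
      calc c ^ (k + 1) * v i = c * (c ^ k * v i) := by ring
      _ ≤ c * ((P ^ k).mulVec v i) := by
          exact mul_le_mul_of_nonneg_left (ih i) hc
      _ = (P ^ k).mulVec (fun j => c * v j) i := h4.symm
      _ ≤ _ := h3
  -- min / max of v
  obtain ⟨i₀⟩ := ‹Nonempty K›
  set vmin := Finset.univ.inf' Finset.univ_nonempty v with hvmin
  set vmax := Finset.univ.sup' Finset.univ_nonempty v with hvmax
  have hvminpos : 0 < vmin := by
    rw [hvmin, Finset.lt_inf'_iff]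
    exact fun i _ => hv i
  have hvmaxpos : 0 < vmax := lt_of_lt_of_le (hv i₀)
    (Finset.le_sup' v (Finset.mem_univ i₀))
  set d := vmin / vmax with hd
  have hdpos : 0 < d := div_pos hvminpos hvmaxpos
  -- norm lower bound
  have hnorm : ∀ k : ℕ, d * c ^ k ≤ ‖(P.map Complex.ofReal) ^ k‖ := by
    intro k
    rw [map_pow_ofReal]
    refine le_trans ?_ (row_sum_le_norm _ i₀)
    have hsum : c ^ k * vmin ≤ vmax * ∑ j, (P ^ k) i₀ j := by
      have h5 : c ^ k * vmin ≤ c ^ k * v i₀ :=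
        mul_le_mul_of_nonneg_left (Finset.inf'_le v (Finset.mem_univ i₀)) (pow_nonneg hc k)
      have h6 : (P ^ k).mulVec v i₀ ≤ ∑ j, (P ^ k) i₀ j * vmax := by
        refine Finset.sum_le_sum fun j _ => ?_
        exact mul_le_mul_of_nonneg_left (Finset.le_sup' v (Finset.mem_univ j))
          (pow_nonneg_entries hP k i₀ j)
      have h7 : ∑ j, (P ^ k) i₀ j * vmax = vmax * ∑ j, (P ^ k) i₀ j := by
        rw [Finset.mul_sum]; exact Finset.sum_congr rfl fun j _ => by ring
      linarith [hiter k i₀]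
    have h8 : ∑ j, ‖((P ^ k).map Complex.ofReal) i₀ j‖ = ∑ j, (P ^ k) i₀ j := by
      refine Finset.sum_congr rfl fun j _ => ?_
      simp [Matrix.map_apply, Complex.norm_real, abs_of_nonneg (pow_nonneg_entries hP k i₀ j)]
    rw [h8, hd, div_mul_eq_mul_div, div_le_iff₀ hvmaxpos]
    calc vmin * c ^ k = c ^ k * vmin := by ring
    _ ≤ vmax * ∑ j, (P ^ k) i₀ j := hsum
    _ = (∑ j, (P ^ k) i₀ j) * vmax := by ring
  -- Gelfand
  have hgel := spectrum.pow_norm_pow_one_div_tendsto_nhds_spectralRadius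
    (P.map Complex.ofReal)
  have hdlim : Filter.Tendsto (fun k : ℕ => d ^ (1 / (k : ℝ))) Filter.atTop (𝓝 1) := by
    have h0 : Filter.Tendsto (fun k : ℕ => 1 / (k : ℝ)) Filter.atTop (𝓝 0) :=
      tendsto_one_div_atTop_nhds_zero_nat
    have hcont : ContinuousAt (fun x : ℝ => d ^ x) 0 :=
      Real.continuousAt_const_rpow (ne_of_gt hdpos)
    have := hcont.tendsto.comp h0
    simpa [Real.rpow_zero, Function.comp_def] using this
  have hflim : Filter.Tendsto (fun k : ℕ => ENNReal.ofReal (d ^ (1 / (k : ℝ)) * c))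
      Filter.atTop (𝓝 (ENNReal.ofReal c)) := by
    have : Filter.Tendsto (fun k : ℕ => d ^ (1 / (k : ℝ)) * c) Filter.atTop (𝓝 (1 * c)) :=
      hdlim.mul tendsto_const_nhds
    rw [one_mul] at this
    exact (ENNReal.continuous_ofReal.tendsto c).comp this
  refine le_of_tendsto_of_tendsto hflim hgel ?_
  filter_upwards [Filter.eventually_ge_atTop 1] with k hk
  have hk0 : (k : ℝ) ≠ 0 := by positivity
  have hbound := hnorm k
  have hdk : 0 ≤ d * c ^ k := mul_nonneg hdpos.le (pow_nonneg hc k)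
  have h9 : (d * c ^ k) ^ (1 / (k : ℝ)) ≤ ‖(P.map Complex.ofReal) ^ k‖ ^ (1 / (k : ℝ)) :=
    Real.rpow_le_rpow hdk hbound (by positivity)
  have h10 : (d * c ^ k) ^ (1 / (k : ℝ)) = d ^ (1 / (k : ℝ)) * c := by
    rw [Real.mul_rpow hdpos.le (pow_nonneg hc k)]
    congr 1
    rw [← Real.rpow_natCast c k, ← Real.rpow_mul hc]
    rw [mul_one_div, div_self hk0, Real.rpow_one]
  exact ENNReal.ofReal_le_ofReal (by rw [← h10]; exact h9)


lemma mem_spectrum_iff_eigen (P : Matrix K K ℝ) (z : ℂ) :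
    z ∈ spectrum ℂ (P.map Complex.ofReal) ↔
      ∃ x : K → ℂ, x ≠ 0 ∧ (P.map Complex.ofReal).mulVec x = z • x := by
  rw [← AlgEquiv.spectrum_eq (Matrix.toLinAlgEquiv' : Matrix K K ℂ ≃ₐ[ℂ] _)
    (P.map Complex.ofReal)]
  rw [← Module.End.hasEigenvalue_iff_mem_spectrum, Module.End.hasEigenvalue_iff,
    Submodule.ne_bot_iff]
  constructor
  · rintro ⟨x, hx, hx0⟩
    rw [Module.End.mem_eigenspace_iff, Matrix.toLinAlgEquiv'_apply] at hx
    exact ⟨x, hx0, hx⟩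
  · rintro ⟨x, hx0, hx⟩
    refine ⟨x, ?_, hx0⟩
    rw [Module.End.mem_eigenspace_iff, Matrix.toLinAlgEquiv'_apply]
    exact hx

theorem perron (P : Matrix K K ℝ) (hP : ∀ i j, 0 ≤ P i j)
    (hirr : ∀ i j, Relation.ReflTransGen (fun a b => 0 < P a b) i j) :
    ∃ ρ : ℝ, 0 ≤ ρ ∧ ((ρ : ℂ) ∈ spectrum ℂ (P.map Complex.ofReal)) ∧
      (∀ z ∈ spectrum ℂ (P.map Complex.ofReal), ‖z‖ ≤ ρ) ∧
      ∃ u : K → ℝ, (∀ i, 0 < u i) ∧ P.mulVec u = ρ • u := by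
  classical
  set a := P.map Complex.ofReal with ha
  have hne : (spectrum ℂ a).Nonempty := spectrum.nonempty a
  have hcpt : IsCompact (spectrum ℂ a) := spectrum.isCompact a
  obtain ⟨z₀, hz₀mem, hz₀max'⟩ :=
    hcpt.exists_isMaxOn hne (continuous_norm.continuousOn)
  have hz₀max : ∀ z ∈ spectrum ℂ a, ‖z‖ ≤ ‖z₀‖ :=
    fun z hz => hz₀max' hz
  set ρ := ‖z₀‖ with hρ
  have hρ0 : 0 ≤ ρ := norm_nonneg z₀
  obtain ⟨x, hx0, hxe⟩ := (mem_spectrum_iff_eigen P z₀).mp hz₀mem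
  set u₀ : K → ℝ := fun i => ‖x i‖ with hu₀
  have hu₀nn : ∀ i, 0 ≤ u₀ i := fun i => norm_nonneg _
  obtain ⟨i₁, hi₁⟩ : ∃ i, u₀ i ≠ 0 := by
    by_contra h
    push_neg at h
    apply hx0
    funext i
    simpa using (norm_eq_zero.mp (h i))
  have hi₁pos : 0 < u₀ i₁ := lt_of_le_of_ne (hu₀nn i₁) (Ne.symm hi₁)
  -- |P x| ≥ ρ |x| componentwise
  have key1 : ∀ i, ρ * u₀ i ≤ P.mulVec u₀ i := by
    intro i
    have h1 : (a.mulVec x) i = z₀ * x i := by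
      rw [hxe]; simp
    have h2 : ‖(a.mulVec x) i‖ = ρ * u₀ i := by
      rw [h1, norm_mul]
    rw [← h2]
    have h3 : (a.mulVec x) i = ∑ j, (P i j : ℂ) * x j := by
      simp [Matrix.mulVec, dotProduct, ha, Matrix.map_apply]
    rw [h3]
    refine le_trans (norm_sum_le _ _) ?_
    refine le_of_eq (Finset.sum_congr rfl fun j _ => ?_)
    rw [norm_mul, Complex.norm_real, Real.norm_eq_abs, abs_of_nonneg (hP i j)]
  set y : K → ℝ := fun i => P.mulVec u₀ i - ρ * u₀ i with hy
  have hynn : ∀ i, 0 ≤ y i := fun i => sub_nonneg.mpr (key1 i)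
  obtain ⟨N, hN⟩ := exists_one_add_pow_pos hP hirr
  set C := (1 + P) ^ N with hC
  have hCnn : ∀ i j, 0 ≤ C i j := fun i j => (hN i j).le
  have hmulpos : ∀ (v : K → ℝ), (∀ i, 0 ≤ v i) → (∃ i, 0 < v i) →
      ∀ i, 0 < C.mulVec v i := by
    rintro v hv ⟨i₂, hi₂⟩ i
    have : 0 < C i i₂ * v i₂ := mul_pos (hN i i₂) hi₂
    refine lt_of_lt_of_le this ?_
    exact Finset.single_le_sum (fun j _ => mul_nonneg (hCnn i j) (hv j)) (Finset.mem_univ i₂)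
  have hPC : Commute P C := ((Commute.one_right P).add_right (Commute.refl P)).pow_right N
  have hPCmv : ∀ v : K → ℝ, P.mulVec (C.mulVec v) = C.mulVec (P.mulVec v) := by
    intro v
    rw [Matrix.mulVec_mulVec, Matrix.mulVec_mulVec, hPC.eq]
  set w := C.mulVec u₀ with hw
  have hwpos : ∀ i, 0 < w i := hmulpos u₀ hu₀nn ⟨i₁, hi₁pos⟩
  -- case analysis on whether y = 0
  have hcase : ∀ i, y i = 0 := by
    by_contra h
    push_neg at h
    obtain ⟨i₂, hi₂⟩ := h
    have hi₂pos : 0 < y i₂ := lt_of_le_of_ne (hynn i₂) (Ne.symm hi₂)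
    set g := C.mulVec y with hg
    have hgpos : ∀ i, 0 < g i := hmulpos y hynn ⟨i₂, hi₂pos⟩
    have hPw : ∀ i, P.mulVec w i = ρ * w i + g i := by
      intro i
      have h4 : P.mulVec u₀ = fun j => ρ * u₀ j + y j := by
        funext j; simp [hy]
      rw [hw, hPCmv, h4]
      have h5 : C.mulVec (fun j => ρ * u₀ j + y j) i
          = ρ * C.mulVec u₀ i + C.mulVec y i := by
        simp [Matrix.mulVec, dotProduct, Finset.mul_sum, ← Finset.sum_add_distrib]
        exact Finset.sum_congr rfl fun j _ => by ring
      rw [h5]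
    set ε := Finset.univ.inf' Finset.univ_nonempty (fun i => g i / w i) with hε
    have hεpos : 0 < ε := by
      rw [hε, Finset.lt_inf'_iff]
      exact fun i _ => div_pos (hgpos i) (hwpos i)
    have hεle : ∀ i, ε * w i ≤ g i := by
      intro i
      have := Finset.inf'_le (fun i => g i / w i) (Finset.mem_univ i)
      calc ε * w i ≤ (g i / w i) * w i :=
        mul_le_mul_of_nonneg_right this (hwpos i).le
      _ = g i := div_mul_cancel₀ (g i) (ne_of_gt (hwpos i))
    have hkey : ∀ i, (ρ + ε) * w i ≤ P.mulVec w i := by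
      intro i
      rw [hPw i]
      have := hεle i
      ring_nf
      nlinarith [hεle i]
    have hlb := spectralRadius_lb (P := P) hP hwpos (by positivity) hkey
    have hub : spectralRadius ℂ a ≤ ENNReal.ofReal ρ := by
      rw [spectralRadius]
      refine iSup₂_le fun z hz => ?_
      rw [← ENNReal.ofReal_coe_nnreal, coe_nnnorm]
      exact ENNReal.ofReal_le_ofReal (hz₀max z hz)
    rw [← ha] at hlb
    have := le_trans hlb hub
    rw [ENNReal.ofReal_le_ofReal_iff hρ0] at this
    linarith
  have heig : P.mulVec u₀ = ρ • u₀ := by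
    funext i
    have := hcase i
    simp only [hy] at this
    simp only [Pi.smul_apply, smul_eq_mul]
    linarith
  refine ⟨ρ, hρ0, ?_, fun z hz => hz₀max z hz, ?_⟩
  · rw [mem_spectrum_iff_eigen]
    refine ⟨fun i => (u₀ i : ℂ), ?_, ?_⟩
    · intro h
      apply hi₁
      have := congrFun h i₁
      simpa using this
    · funext i
      have h6 : (a.mulVec fun j => (u₀ j : ℂ)) i = ((P.mulVec u₀ i : ℝ) : ℂ) := by
        simp [Matrix.mulVec, dotProduct, ha, Matrix.map_apply]
      rw [h6, heig]
      simp
  · refine ⟨w, hwpos, ?_⟩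
    rw [hw, hPCmv, heig]
    funext i
    simp [Matrix.mulVec_smul]


lemma specRad_le {a : Matrix K K ℂ} {ρ : ℝ}
    (h : ∀ z ∈ spectrum ℂ a, ‖z‖ ≤ ρ) :
    spectralRadius ℂ a ≤ ENNReal.ofReal ρ := by
  rw [spectralRadius]
  refine iSup₂_le fun z hz => ?_
  rw [← ENNReal.ofReal_coe_nnreal, coe_nnnorm]
  exact ENNReal.ofReal_le_ofReal (h z hz)

theorem metzler_main (A : Matrix K K ℝ)
    (hoff : ∀ i j, i ≠ j → 0 ≤ A i j)
    (hirr : ∀ i j, Relation.ReflTransGen (fun a b => 0 < A a b ∨ a = b) i j) :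
    (∃ u : K → ℝ, (∀ i, 0 < u i) ∧ A.mulVec u = (specAbscissa A) • u) ∧
      (∀ (v : K → ℝ) (c : ℝ), (∀ i, 0 < v i) → 0 ≤ c →
        (∀ i, c * v i ≤ A.mulVec v i) → c ≤ specAbscissa A) := by
  classical
  set t : ℝ := 1 + ∑ i, |A i i| with ht
  have ht1 : ∀ i, |A i i| ≤ ∑ k, |A k k| :=
    fun i => Finset.single_le_sum (f := fun k => |A k k|)
      (fun k _ => abs_nonneg _) (Finset.mem_univ i)
  have ht0 : (0:ℝ) ≤ t := by
    have : (0:ℝ) ≤ ∑ i, |A i i| := Finset.sum_nonneg fun i _ => abs_nonneg _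
    linarith
  set P : Matrix K K ℝ := A + t • (1 : Matrix K K ℝ) with hPdef
  have hPentry : ∀ i j, P i j = A i j + if i = j then t else 0 := by
    intro i j
    by_cases h : i = j
    · subst h; simp [hPdef, Matrix.add_apply, Matrix.smul_apply, Matrix.one_apply]
    · simp [hPdef, Matrix.add_apply, Matrix.smul_apply, Matrix.one_apply, h]
  have hPdiagpos : ∀ i, 0 < P i i := by
    intro i
    have h := hPentry i i
    rw [if_pos rfl] at h
    rw [h, ht]
    have := ht1 i
    have := neg_abs_le (A i i)
    linarith
  have hPnn : ∀ i j, 0 ≤ P i j := by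
    intro i j
    by_cases h : i = j
    · subst h; exact (hPdiagpos i).le
    · rw [hPentry, if_neg h, add_zero]; exact hoff i j h
  have hPirr : ∀ i j, Relation.ReflTransGen (fun a b => 0 < P a b) i j := by
    intro i j
    refine Relation.ReflTransGen.mono ?_ _ _ (hirr i j)
    rintro a b (hab | rfl)
    · by_cases h : a = b
      · subst h; exact hPdiagpos a
      · rw [hPentry, if_neg h, add_zero]; exact hab
    · exact hPdiagpos a
  obtain ⟨ρ, hρ0, hρmem, hρmax, u, hupos, huEig⟩ := perron P hPnn hPirr
  -- spectrum shift
  have hmap : P.map Complex.ofReal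
      = algebraMap ℂ (Matrix K K ℂ) (t : ℂ) + A.map Complex.ofReal := by
    ext i j
    simp only [Matrix.map_apply, Matrix.add_apply, Matrix.algebraMap_matrix_apply]
    rw [hPentry]
    split_ifs <;> simp [Algebra.algebraMap_self_apply] <;> push_cast <;> ring
  have hspec : spectrum ℂ (P.map Complex.ofReal)
      = ({(t : ℂ)} : Set ℂ) + spectrum ℂ (A.map Complex.ofReal) := by
    rw [hmap, ← spectrum.singleton_add_eq]
  have hmemiff : ∀ z : ℂ, z ∈ spectrum ℂ (A.map Complex.ofReal) ↔
      (t : ℂ) + z ∈ spectrum ℂ (P.map Complex.ofReal) := by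
    intro z
    rw [hspec, Set.singleton_add]
    constructor
    · intro h; exact ⟨z, h, rfl⟩
    · rintro ⟨z', hz', hz''⟩
      have : z' = z := by
        have := hz''
        field_simp at this
        linear_combination this
      rwa [← this]
  -- specAbscissa A = ρ - t
  have hmemA : ((ρ - t : ℝ) : ℂ) ∈ spectrum ℂ (A.map Complex.ofReal) := by
    rw [hmemiff]
    have : (t : ℂ) + ((ρ - t : ℝ) : ℂ) = (ρ : ℂ) := by push_cast; ring
    rwa [this]
  have hboundA : ∀ z ∈ spectrum ℂ (A.map Complex.ofReal), z.re ≤ ρ - t := by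
    intro z hz
    have h1 := hρmax _ ((hmemiff z).mp hz)
    have h2 : ((t : ℂ) + z).re ≤ ‖(t : ℂ) + z‖ := Complex.re_le_norm _
    simp only [Complex.add_re, Complex.ofReal_re] at h2
    linarith
  have hSA : specAbscissa A = ρ - t := by
    rw [specAbscissa]
    apply le_antisymm
    · refine csSup_le ⟨ρ - t, ⟨_, hmemA, by simp⟩⟩ ?_
      rintro r ⟨z, hz, rfl⟩
      exact hboundA z hz
    · refine le_csSup ⟨ρ - t, ?_⟩ ⟨_, hmemA, by simp⟩
      rintro r ⟨z, hz, rfl⟩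
      exact hboundA z hz
  constructor
  · refine ⟨u, hupos, ?_⟩
    have hAu : A.mulVec u = P.mulVec u - t • u := by
      rw [hPdef]
      funext i
      simp [Matrix.add_mulVec, Matrix.smul_mulVec, Matrix.one_mulVec]
    rw [hAu, huEig, hSA]
    funext i
    simp [Pi.smul_apply, smul_eq_mul]
    ring
  · intro v c hv hc hle
    have hlev : ∀ i, (c + t) * v i ≤ P.mulVec v i := by
      intro i
      have : P.mulVec v i = A.mulVec v i + t * v i := by
        rw [hPdef]
        simp [Matrix.add_mulVec, Matrix.smul_mulVec, Matrix.one_mulVec]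
      rw [this]
      have := hle i
      ring_nf
      nlinarith [hle i]
    have hlb := spectralRadius_lb hPnn hv (by positivity) hlev
    have hub := specRad_le hρmax
    have := le_trans hlb hub
    rw [ENNReal.ofReal_le_ofReal_iff hρ0] at this
    rw [hSA]
    linarith

end Norm


section KT
variable {K : Type*}

/-- Knaster–Tarski fixed point on an order interval of `K → ℝ`. -/
lemma exists_fixedPoint_Icc (lo hi : K → ℝ) (hlohi : lo ≤ hi)
    (H : (K → ℝ) → (K → ℝ))
    (Hmono : ∀ x y, lo ≤ x → x ≤ y → y ≤ hi → H x ≤ H y)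
    (Hlo : lo ≤ H lo) (Hhi : H hi ≤ hi) :
    ∃ p, lo ≤ p ∧ p ≤ hi ∧ H p = p := by
  haveI : Fact (lo ≤ hi) := ⟨hlohi⟩
  have hmem : ∀ x : Set.Icc lo hi, H (x : K → ℝ) ∈ Set.Icc lo hi := by
    rintro ⟨x, hx1, hx2⟩
    exact ⟨le_trans Hlo (Hmono lo x le_rfl hx1 hx2),
      le_trans (Hmono x hi hx1 hx2 le_rfl) Hhi⟩
  set T : Set.Icc lo hi →o Set.Icc lo hi :=
    ⟨fun x => ⟨H (x : K → ℝ), hmem x⟩, by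
      rintro ⟨x, hx1, hx2⟩ ⟨y, hy1, hy2⟩ hxy
      exact Subtype.mk_le_mk.mpr (Hmono x y hx1 (Subtype.mk_le_mk.mp hxy) hy2)⟩ with hT
  refine ⟨(T.lfp : K → ℝ), T.lfp.2.1, T.lfp.2.2, ?_⟩
  have := OrderHom.map_lfp T
  exact congrArg Subtype.val this

end KT

end PFAux

/-- There exists an entrywise-positive `p*` satisfying the endemic
equilibrium equation `(B F* − D − L*) p* − diag(p*) B F* p* = 0` if and only if the
spectral abscissa `μ(B F* − D − L*)` is positive. -/
theorem endemic_equilibrium_exists_iff_specAbscissa_pos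
    {n m : ℕ} (hn : 2 ≤ n) (hm : 1 ≤ m)
    (Q : Fin m → Matrix (Fin n) (Fin n) ℝ)
    (hQoff : ∀ (α : Fin m) (i j : Fin n), i ≠ j → 0 ≤ Q α i j)
    (hQdiag : ∀ (α : Fin m) (i : Fin n), Q α i i = -∑ j ∈ Finset.univ \ {i}, Q α i j)
    (hQirr : ∀ (α : Fin m) (i j : Fin n),
      Relation.ReflTransGen (fun a b => 0 < Q α a b) i j)
    (piv : Fin m → Fin n → ℝ) (hpivpos : ∀ α i, 0 < piv α i)
    (hpiveig : ∀ (α : Fin m) (i : Fin n), ∑ j, Q α j i * piv α j = 0)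
    (hpivsum : ∀ α, ∑ i, piv α i = 1)
    (N : Fin m → ℝ) (hN : ∀ α, 0 < N α)
    (β δ : Fin m → Fin n → ℝ)
    (hβ : ∀ α i, 0 < β α i) (hδ : ∀ α i, 0 ≤ δ α i)
    (hδpos : ∀ α, ∃ k, 0 < δ α k) :
    (∃ p : Fin m × Fin n → ℝ, (∀ q, 0 < p q) ∧
        (pairDiag β * Fstar N piv - pairDiag δ - Lstar Q piv).mulVec p
          - (Matrix.diagonal p).mulVec ((pairDiag β * Fstar N piv).mulVec p) = 0)
      ↔ 0 < specAbscissa (pairDiag β * Fstar N piv - pairDiag δ - Lstar Q piv) := by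
  classical
  haveI : Nonempty (Fin m × Fin n) := ⟨⟨⟨0, by omega⟩, ⟨0, by omega⟩⟩⟩
  -- basic abbreviations
  set S : Fin n → ℝ := fun i => ∑ τ, N τ * piv τ i with hS
  have hSpos : ∀ i, 0 < S i := by
    intro i
    refine Finset.sum_pos (fun τ _ => mul_pos (hN τ) (hpivpos τ i)) ⟨⟨0, by omega⟩, Finset.mem_univ _⟩
  set M : Matrix (Fin m × Fin n) (Fin m × Fin n) ℝ := pairDiag β * Fstar N piv with hM
  have hMentry : ∀ q q', M q q' =
      if q.2 = q'.2 then β q.1 q.2 * (N q'.1 * piv q'.1 q.2 / S q.2) else 0 := by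
    intro q q'
    rw [hM, pairDiag, Matrix.diagonal_mul]
    show β q.1 q.2 * Fstar N piv q q' = _
    rw [Fstar]
    by_cases h : q.2 = q'.2 <;> simp [Matrix.of_apply, h, hS]
  
  have hMnn : ∀ q q', 0 ≤ M q q' := by
    intro q q'
    rw [hMentry]
    split_ifs
    · exact le_of_lt (mul_pos (hβ _ _)
        (div_pos (mul_pos (hN _) (hpivpos _ _)) (hSpos _)))
    · exact le_rfl
  have hMdiagpos : ∀ q, 0 < M q q := by
    intro q
    rw [hMentry, if_pos rfl]
    exact mul_pos (hβ _ _) (div_pos (mul_pos (hN _) (hpivpos _ _)) (hSpos _))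
  set ν : Fin m × Fin n → ℝ := fun q => ∑ j ∈ Finset.univ \ {q.2}, Q q.1 q.2 j with hν
  have hνnn : ∀ q, 0 ≤ ν q := by
    intro q
    refine Finset.sum_nonneg fun j hj => ?_
    rw [Finset.mem_sdiff, Finset.mem_singleton] at hj
    exact hQoff q.1 q.2 j (Ne.symm hj.2)
  have hQdiagle : ∀ (α : Fin m) (i : Fin n), Q α i i ≤ 0 := by
    intro α i
    rw [hQdiag α i, neg_nonpos]
    refine Finset.sum_nonneg fun j hj => ?_
    rw [Finset.mem_sdiff, Finset.mem_singleton] at hj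
    exact hQoff α i j (Ne.symm hj.2)
  have hνpos : ∀ q, 0 < ν q := by
    intro q
    haveI : Nontrivial (Fin n) := Fin.nontrivial_iff_two_le.mpr hn
    obtain ⟨j, hj⟩ := exists_ne q.2
    rcases (hQirr q.1 q.2 j).cases_head with h | ⟨c, hc, _⟩
    · exact absurd h.symm hj
    · have hcne : c ≠ q.2 := by
        intro h
        rw [h] at hc
        exact absurd hc (not_lt.mpr (hQdiagle q.1 q.2))
      refine lt_of_lt_of_le hc ?_
      refine Finset.single_le_sum (fun x hx => ?_) ?_
      · rw [Finset.mem_sdiff, Finset.mem_singleton] at hx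
        exact hQoff q.1 q.2 x (Ne.symm hx.2)
      · rw [Finset.mem_sdiff, Finset.mem_singleton]
        exact ⟨Finset.mem_univ _, hcne⟩
  set L : Matrix (Fin m × Fin n) (Fin m × Fin n) ℝ := Lstar Q piv with hL
  have hLdiag : ∀ q, L q q = ν q := by
    intro q
    simp [hL, Lstar, hν]
  have hLoffentry : ∀ q q' : Fin m × Fin n, q ≠ q' →
      L q q' = if q.1 = q'.1 then -(Q q.1 q'.2 q.2 * piv q.1 q'.2 / piv q.1 q.2) else 0 := by
    intro q q' hqq'
    by_cases h1 : q.1 = q'.1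
    · have h2 : q.2 ≠ q'.2 := by
        intro h2
        exact hqq' (Prod.ext h1 h2)
      simp [hL, Lstar, h1, h2]
    · simp [hL, Lstar, h1]
  have hLoffnn : ∀ q q' : Fin m × Fin n, q ≠ q' → L q q' ≤ 0 := by
    intro q q' hqq'
    rw [hLoffentry q q' hqq']
    split_ifs with h1
    · rw [neg_nonpos]
      by_cases h2 : q.2 = q'.2
      · exact absurd (Prod.ext h1 h2) hqq'
      · exact div_nonneg (mul_nonneg (hQoff q.1 q'.2 q.2 (fun h => h2 h.symm)) (hpivpos q.1 q'.2).le) (hpivpos q.1 q.2).le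
    · exact le_rfl
  
  have hLrow : ∀ q : Fin m × Fin n, ∑ q', L q q' = 0 := by
    rintro ⟨α, i⟩
    rw [Fintype.sum_prod_type]
    have h0 : ∀ σ ∈ Finset.univ, σ ≠ α → ∑ j, L (α, i) (σ, j) = 0 := by
      intro σ _ hσ
      refine Finset.sum_eq_zero fun j _ => ?_
      show Lstar Q piv (α, i) (σ, j) = 0
      rw [Lstar]
      exact if_neg (Ne.symm hσ)
    rw [Finset.sum_eq_single α h0 (fun h => absurd (Finset.mem_univ α) h)]
    rw [Finset.sum_eq_sum_sdiff_singleton_add (Finset.mem_univ i) (fun j => L (α,i) (α,j))]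
    have hoffv : ∑ j ∈ Finset.univ \ {i}, L (α,i) (α,j) = -(ν (α,i)) := by
      have h1 : ∀ j ∈ Finset.univ \ {i}, L (α,i) (α,j) = -(Q α j i * piv α j) / piv α i := by
        intro j hj
        rw [Finset.mem_sdiff, Finset.mem_singleton] at hj
        have hne : ((α, i) : Fin m × Fin n) ≠ (α, j) := by
          simp [Prod.ext_iff, Ne.symm hj.2]
        rw [hLoffentry _ _ hne, if_pos rfl]
        ring
      rw [Finset.sum_congr rfl h1, ← Finset.sum_div]
      have h2 : ∑ j ∈ Finset.univ \ {i}, -(Q α j i * piv α j) = Q α i i * piv α i := by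
        have h3 := hpiveig α i
        rw [Finset.sum_eq_sum_sdiff_singleton_add (Finset.mem_univ i)
          (fun j => Q α j i * piv α j)] at h3
        rw [Finset.sum_neg_distrib]
        linarith
      rw [h2]
      have h4 : Q α i i = -ν (α, i) := by
        rw [hQdiag α i]
      rw [h4, neg_mul, neg_div, mul_div_assoc, div_self (ne_of_gt (hpivpos α i)), mul_one]
    rw [hoffv, hLdiag (α, i)]
    ring
  
  set A : Matrix (Fin m × Fin n) (Fin m × Fin n) ℝ := M - pairDiag δ - L with hA
  have hdiagδ : ∀ q q' : Fin m × Fin n, pairDiag δ q q' = if q = q' then δ q.1 q.2 else 0 := by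
    intro q q'
    rw [pairDiag]
    by_cases h : q = q'
    · subst h; simp
    · simp [Matrix.diagonal_apply_ne _ h, h]
  have hAoffentry : ∀ q q' : Fin m × Fin n, q ≠ q' → A q q' = M q q' - L q q' := by
    intro q q' h
    simp [hA, Matrix.sub_apply, hdiagδ q q', h]
  have hAoff : ∀ q q' : Fin m × Fin n, q ≠ q' → 0 ≤ A q q' := by
    intro q q' h
    rw [hAoffentry q q' h]
    have h1 := hLoffnn q q' h
    have h2 := hMnn q q'
    linarith
  have hdiagmv : ∀ (v p : Fin m × Fin n → ℝ) (q : Fin m × Fin n),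
      (Matrix.diagonal v).mulVec p q = v q * p q := fun v p q => Matrix.mulVec_diagonal v p q
  have hDmv : ∀ (p : Fin m × Fin n → ℝ) (q : Fin m × Fin n),
      (pairDiag δ).mulVec p q = δ q.1 q.2 * p q := by
    intro p q
    rw [pairDiag]
    exact Matrix.mulVec_diagonal _ _ _
  have hAmv : ∀ (p : Fin m × Fin n → ℝ) (q : Fin m × Fin n),
      A.mulVec p q = M.mulVec p q - δ q.1 q.2 * p q - L.mulVec p q := by
    intro p q
    rw [hA, Matrix.sub_mulVec, Matrix.sub_mulVec]
    simp [Pi.sub_apply, hDmv p q]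
  have hEq : ∀ p : Fin m × Fin n → ℝ,
      (A.mulVec p - (Matrix.diagonal p).mulVec (M.mulVec p) = 0) ↔
        ∀ q, A.mulVec p q = p q * M.mulVec p q := by
    intro p
    constructor
    · intro h q
      have h1 := congrFun h q
      simp only [Pi.sub_apply, Pi.zero_apply, hdiagmv p (M.mulVec p) q] at h1
      linarith
    · intro h
      funext q
      simp only [Pi.sub_apply, Pi.zero_apply, hdiagmv p (M.mulVec p) q, h q]
      ring
  -- irreducibility of A
  have hAposM : ∀ q q' : Fin m × Fin n, q ≠ q' → q.2 = q'.2 → 0 < A q q' := by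
    intro q q' h h2
    rw [hAoffentry q q' h]
    have hMp : 0 < M q q' := by
      rw [hMentry, if_pos h2]
      exact mul_pos (hβ _ _) (div_pos (mul_pos (hN _) (hpivpos _ _)) (hSpos _))
    have hLp := hLoffnn q q' h
    linarith
  have hAposQ : ∀ (α : Fin m) (i j : Fin n), i ≠ j → 0 < Q α j i → 0 < A (α, i) (α, j) := by
    intro α i j hij hQp
    have hne : ((α, i) : Fin m × Fin n) ≠ (α, j) := by simp [Prod.ext_iff, hij]
    rw [hAoffentry _ _ hne]
    have hMz : M (α, i) (α, j) = 0 := by rw [hMentry]; exact if_neg hij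
    have hLv : L (α, i) (α, j) = -(Q α j i * piv α j / piv α i) := by
      rw [hLoffentry _ _ hne]; exact if_pos rfl
    rw [hMz, hLv]
    have : 0 < Q α j i * piv α j / piv α i :=
      div_pos (mul_pos hQp (hpivpos α j)) (hpivpos α i)
    linarith
  have hlayer : ∀ (α : Fin m) (i j : Fin n),
      Relation.ReflTransGen (fun a b : Fin m × Fin n => 0 < A a b ∨ a = b) (α, i) (α, j) := by
    intro α i j
    have h := (hQirr α j i).swap
    refine Relation.ReflTransGen.lift (r := Function.swap fun a b => 0 < Q α a b)
      (p := fun a b : Fin m × Fin n => 0 < A a b ∨ a = b)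
      (fun i : Fin n => ((α, i) : Fin m × Fin n)) ?_ _ _ h
    intro a b hab
    by_cases hc : a = b
    · exact Or.inr (by rw [hc])
    · exact Or.inl (hAposQ α a b hc hab)
  have hAirr : ∀ q q' : Fin m × Fin n,
      Relation.ReflTransGen (fun a b => 0 < A a b ∨ a = b) q q' := by
    rintro ⟨α, i⟩ ⟨σ, j⟩
    by_cases hσ : α = σ
    · subst hσ; exact hlayer α i j
    · refine (hlayer α i j).tail ?_
      exact Or.inl (hAposM (α, j) (σ, j) (by simp [Prod.ext_iff, hσ]) rfl)
  obtain ⟨⟨u, hupos, huEig⟩, hcb⟩ := PFAux.metzler_main A hAoff hAirr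
  -- positivity of M-action on positive vectors
  have hMvpos : ∀ p : Fin m × Fin n → ℝ, (∀ q, 0 < p q) → ∀ q, 0 < M.mulVec p q := by
    intro p hp q
    have h1 : 0 < M q q * p q := mul_pos (hMdiagpos q) (hp q)
    refine lt_of_lt_of_le h1 ?_
    exact Finset.single_le_sum (fun j _ => mul_nonneg (hMnn q j) (hp j).le)
      (Finset.mem_univ q)
  constructor
  · rintro ⟨p, hppos, hpeq⟩
    have hpe := (hEq p).mp hpeq
    set c := Finset.univ.inf' Finset.univ_nonempty (fun q => M.mulVec p q) with hc
    have hcpos : 0 < c := by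
      rw [hc, Finset.lt_inf'_iff]
      exact fun q _ => hMvpos p hppos q
    have hle : ∀ q, c * p q ≤ A.mulVec p q := by
      intro q
      rw [hpe q]
      have h1 : c ≤ M.mulVec p q := Finset.inf'_le _ (Finset.mem_univ q)
      nlinarith [hppos q]
    have := hcb p c hppos hcpos.le hle
    linarith
  · intro hμ
    set μ := specAbscissa A with hμdef
    set sp : (Fin m × Fin n → ℝ) → (Fin m × Fin n) → ℝ :=
      fun p q => ∑ q' ∈ Finset.univ \ {q}, -(L q q') * p q' with hsp
    have hspcoef : ∀ q, ∑ q' ∈ Finset.univ \ {q}, -(L q q') = ν q := by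
      intro q
      have h1 := hLrow q
      rw [Finset.sum_eq_sum_sdiff_singleton_add (Finset.mem_univ q) (fun q' => L q q')] at h1
      rw [Finset.sum_neg_distrib]
      rw [hLdiag q] at h1
      linarith
    have hcoefnn : ∀ (q q' : Fin m × Fin n), q' ∈ Finset.univ \ ({q} : Finset _) →
        0 ≤ -(L q q') := by
      intro q q' hq'
      rw [Finset.mem_sdiff, Finset.mem_singleton] at hq'
      have := hLoffnn q q' (Ne.symm hq'.2)
      linarith
    have hspnn : ∀ p, (∀ q', (0:ℝ) ≤ p q') → ∀ q, 0 ≤ sp p q := by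
      intro p hp q
      exact Finset.sum_nonneg fun q' hq' => mul_nonneg (hcoefnn q q' hq') (hp q')
    have hspmono : ∀ p p', (∀ q', (0:ℝ) ≤ p q') → (∀ q', p q' ≤ p' q') →
        ∀ q, sp p q ≤ sp p' q := by
      intro p p' hp hpp q
      exact Finset.sum_le_sum fun q' hq' =>
        mul_le_mul_of_nonneg_left (hpp q') (hcoefnn q q' hq')
    have hsple : ∀ p, (∀ q', (0:ℝ) ≤ p q') → (∀ q', p q' ≤ 1) → ∀ q, sp p q ≤ ν q := by
      intro p hp h1 q
      calc sp p q ≤ ∑ q' ∈ Finset.univ \ {q}, -(L q q') * 1 :=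
        Finset.sum_le_sum fun q' hq' =>
          mul_le_mul_of_nonneg_left (h1 q') (hcoefnn q q' hq')
      _ = ν q := by
          rw [← hspcoef q]
          exact Finset.sum_congr rfl fun q' _ => mul_one _
    have hsplin : ∀ (ε : ℝ) (p : Fin m × Fin n → ℝ) q,
        sp (fun q' => ε * p q') q = ε * sp p q := by
      intro ε p q
      show ∑ q' ∈ Finset.univ \ {q}, -(L q q') * (ε * p q')
        = ε * ∑ q' ∈ Finset.univ \ {q}, -(L q q') * p q'
      rw [Finset.mul_sum]
      exact Finset.sum_congr rfl fun q' _ => by ring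
    have hLmv : ∀ (p : Fin m × Fin n → ℝ) q, L.mulVec p q = ν q * p q - sp p q := by
      intro p q
      have h1 : L.mulVec p q = ∑ q', L q q' * p q' := rfl
      rw [h1, Finset.sum_eq_sum_sdiff_singleton_add (Finset.mem_univ q)
        (fun q' => L q q' * p q'), hLdiag q]
      have h2 : sp p q = -∑ q' ∈ Finset.univ \ {q}, L q q' * p q' := by
        show ∑ q' ∈ Finset.univ \ {q}, -(L q q') * p q' = _
        rw [← Finset.sum_neg_distrib]
        exact Finset.sum_congr rfl fun q' _ => by ring
      rw [h2]
      ring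
    set den : (Fin m × Fin n → ℝ) → (Fin m × Fin n) → ℝ :=
      fun p q => δ q.1 q.2 + ν q + M.mulVec p q with hdend
    have hdenpos : ∀ p, (∀ q', (0:ℝ) ≤ p q') → ∀ q, 0 < den p q := by
      intro p hp q
      have h1 := hδ q.1 q.2
      have h2 := hνpos q
      have h3 : 0 ≤ M.mulVec p q :=
        Finset.sum_nonneg fun j _ => mul_nonneg (hMnn q j) (hp j)
      show 0 < δ q.1 q.2 + ν q + M.mulVec p q
      linarith
    set H : (Fin m × Fin n → ℝ) → (Fin m × Fin n → ℝ) :=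
      fun p q => (M.mulVec p q + sp p q) / den p q with hH
    have hratio : ∀ a a' s s' d nn : ℝ, 0 ≤ a → a ≤ a' → 0 ≤ s → s ≤ s' → s' ≤ nn →
        0 ≤ d → 0 < nn → (a + s) / (d + nn + a) ≤ (a' + s') / (d + nn + a') := by
      intro a a' s s' d nn ha haa hs hss hsn hd hn
      rw [div_le_div_iff₀ (by linarith) (by linarith)]
      nlinarith [mul_nonneg (sub_nonneg.mpr haa) (by linarith : (0:ℝ) ≤ d + nn - s'),
        mul_nonneg (sub_nonneg.mpr hss) (by linarith : (0:ℝ) ≤ d + nn + a')]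
    -- the subsolution
    have hMu : ∀ q, 0 < M.mulVec u q := hMvpos u hupos
    set ε := min (Finset.univ.inf' Finset.univ_nonempty (fun q => μ / M.mulVec u q))
      (Finset.univ.inf' Finset.univ_nonempty (fun q => 1 / u q)) with hε
    have hεpos : 0 < ε := by
      rw [hε, lt_min_iff]
      constructor
      · rw [Finset.lt_inf'_iff]
        exact fun q _ => div_pos hμ (hMu q)
      · rw [Finset.lt_inf'_iff]
        exact fun q _ => div_pos one_pos (hupos q)
    have hε1 : ∀ q, ε * M.mulVec u q ≤ μ := by
      intro q
      have h1 : ε ≤ μ / M.mulVec u q :=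
        le_trans (min_le_left _ _) (Finset.inf'_le _ (Finset.mem_univ q))
      rw [le_div_iff₀ (hMu q)] at h1
      linarith
    have hε2 : ∀ q, ε * u q ≤ 1 := by
      intro q
      have h1 : ε ≤ 1 / u q :=
        le_trans (min_le_right _ _) (Finset.inf'_le _ (Finset.mem_univ q))
      rw [le_div_iff₀ (hupos q)] at h1
      linarith
    set lo : Fin m × Fin n → ℝ := fun q => ε * u q with hlo
    have hlopos : ∀ q, 0 < lo q := fun q => mul_pos hεpos (hupos q)
    have hlole1 : lo ≤ fun _ => (1:ℝ) := Pi.le_def.mpr fun q => hε2 q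
    have hMlo : ∀ q, M.mulVec lo q = ε * M.mulVec u q := by
      intro q
      have h1 : M.mulVec lo q = ∑ q', M q q' * (ε * u q') := rfl
      have h2 : ε * M.mulVec u q = ∑ q', ε * (M q q' * u q') := by
        rw [← Finset.mul_sum]
        rfl
      rw [h1, h2]
      exact Finset.sum_congr rfl fun q' _ => by ring
    have hkeyu : ∀ q, M.mulVec u q + sp u q = μ * u q + (δ q.1 q.2 + ν q) * u q := by
      intro q
      have h1 := hAmv u q
      have h2 : A.mulVec u q = μ * u q := by
        rw [huEig]
        simp [Pi.smul_apply, smul_eq_mul]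
      rw [hLmv u q] at h1
      nlinarith [h1, h2]
    have hHlo : lo ≤ H lo := by
      refine Pi.le_def.mpr fun q => ?_
      have hd := hdenpos lo (fun q' => (hlopos q').le) q
      show lo q ≤ (M.mulVec lo q + sp lo q) / den lo q
      rw [le_div_iff₀ hd]
      have h3 : sp lo q = ε * sp u q := hsplin ε u q
      have h4 : den lo q = δ q.1 q.2 + ν q + ε * M.mulVec u q := by
        show δ q.1 q.2 + ν q + M.mulVec lo q = _
        rw [hMlo q]
      rw [h3, h4, hMlo q]
      have h5 := hkeyu q
      have h6 := hε1 q
      have h7 : lo q = ε * u q := rfl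
      rw [h7]
      nlinarith [mul_le_mul_of_nonneg_left h6 (mul_nonneg hεpos.le (hupos q).le),
        mul_nonneg hεpos.le (hupos q).le]
    have hHmono : ∀ x y, lo ≤ x → x ≤ y → y ≤ (fun _ => (1:ℝ)) → H x ≤ H y := by
      intro x y hlox hxy hy1
      refine Pi.le_def.mpr fun q => ?_
      have hx0 : ∀ q', (0:ℝ) ≤ x q' :=
        fun q' => le_trans (hlopos q').le (Pi.le_def.mp hlox q')
      have hy0 : ∀ q', (0:ℝ) ≤ y q' := fun q' => le_trans (hx0 q') (Pi.le_def.mp hxy q')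
      have hy1' : ∀ q', y q' ≤ 1 := fun q' => Pi.le_def.mp hy1 q'
      show (M.mulVec x q + sp x q) / den x q ≤ (M.mulVec y q + sp y q) / den y q
      have hax : (0:ℝ) ≤ M.mulVec x q :=
        Finset.sum_nonneg fun j _ => mul_nonneg (hMnn q j) (hx0 j)
      have haxy : M.mulVec x q ≤ M.mulVec y q :=
        PFAux.mulVec_mono hMnn (fun q' => Pi.le_def.mp hxy q') q
      exact hratio _ _ _ _ _ _ hax haxy (hspnn x hx0 q)
        (hspmono x y hx0 (fun q' => Pi.le_def.mp hxy q') q)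
        (hsple y hy0 hy1' q) (hδ q.1 q.2) (hνpos q)
    have hHhi : H (fun _ => (1:ℝ)) ≤ fun _ => (1:ℝ) := by
      refine Pi.le_def.mpr fun q => ?_
      have hp0 : ∀ q' : Fin m × Fin n, (0:ℝ) ≤ (fun _ => (1:ℝ)) q' := fun _ => zero_le_one
      have hd := hdenpos (fun _ => (1:ℝ)) hp0 q
      show (M.mulVec (fun _ => (1:ℝ)) q + sp (fun _ => (1:ℝ)) q) / den (fun _ => (1:ℝ)) q ≤ 1
      rw [div_le_one hd]
      have h1 := hsple (fun _ => (1:ℝ)) hp0 (fun _ => le_rfl) q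
      have h2 := hδ q.1 q.2
      show _ ≤ δ q.1 q.2 + ν q + M.mulVec (fun _ => (1:ℝ)) q
      linarith
    obtain ⟨p, hplo, hp1, hpfix⟩ := PFAux.exists_fixedPoint_Icc lo (fun _ => (1:ℝ))
      hlole1 H hHmono hHlo hHhi
    have hppos : ∀ q, 0 < p q := fun q => lt_of_lt_of_le (hlopos q) (Pi.le_def.mp hplo q)
    refine ⟨p, hppos, (hEq p).mpr ?_⟩
    intro q
    have hp0 : ∀ q', (0:ℝ) ≤ p q' := fun q' => (hppos q').le
    have hd := hdenpos p hp0 q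
    have hfixq : (M.mulVec p q + sp p q) / den p q = p q := congrFun hpfix q
    rw [div_eq_iff (ne_of_gt hd)] at hfixq
    have hden' : den p q = δ q.1 q.2 + ν q + M.mulVec p q := rfl
    rw [hden'] at hfixq
    rw [hAmv p q, hLmv p q]
    linear_combination hfixq
end

section
/- If the spectral abscissa satisfies μ(B F* − D − L*) ≤ 0, then for each node i ∈ {1,…,n} there exists a layer α ∈ {1,…,m} such that δ^α_i > β^α_i − ν^α_i. -/
open Matrix BigOperators Finset

open scoped ENNReal NNReal

namespace SpecAux

variable {k : Type*} [Fintype k] [DecidableEq k]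

attribute [local instance] Matrix.linftyOpNormedAddCommGroup Matrix.linftyOpNormedRing
  Matrix.linftyOpNormedAlgebra

lemma rowsum_le_nnnorm (B : Matrix k k ℝ) (p : k) : ∑ q, ‖B p q‖₊ ≤ ‖B‖₊ := by
  rw [Matrix.linfty_opNNNorm_def]
  exact Finset.le_sup (f := fun i => ∑ q, ‖B i q‖₊) (Finset.mem_univ p)

lemma nnnorm_map_ofReal (B : Matrix k k ℝ) : ‖B.map (Complex.ofReal)‖₊ = ‖B‖₊ := by
  simp [Matrix.linfty_opNNNorm_def, Matrix.map_apply]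

lemma map_pow' (A : Matrix k k ℝ) (t : ℕ) :
    (A.map Complex.ofReal) ^ t = (A ^ t).map Complex.ofReal := by
  have h : A.map Complex.ofReal = Complex.ofRealHom.mapMatrix A := rfl
  rw [h, ← map_pow]; rfl

lemma pow_entry_nonneg (A : Matrix k k ℝ) (hA : ∀ p q, 0 ≤ A p q) :
    ∀ t p q, 0 ≤ (A ^ t) p q := by
  intro t
  induction t with
  | zero =>
    intro p q
    by_cases h : p = q <;> simp [pow_zero, Matrix.one_apply, h]
  | succ t ih =>
    intro p q
    rw [pow_succ, Matrix.mul_apply]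
    exact Finset.sum_nonneg fun r _ => mul_nonneg (ih p r) (hA r q)


lemma spectralRadius_ge [Nonempty k] (A : Matrix k k ℝ) (hA : ∀ p q, 0 ≤ A p q)
    (v : k → ℝ) (hv : ∀ p, 0 < v p) (lam : ℝ) (hlam : 0 ≤ lam)
    (hAv : ∀ p, lam * v p ≤ A.mulVec v p) :
    (lam.toNNReal : ℝ≥0∞) ≤ spectralRadius ℂ (A.map Complex.ofReal) := by
  have hpow : ∀ (t : ℕ) (p : k), lam ^ t * v p ≤ ((A ^ t).mulVec v) p := by
    intro t
    induction t with
    | zero => intro p; simp [Matrix.one_mulVec]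
    | succ t ih =>
      intro p
      have hrw : (A ^ (t + 1)).mulVec v = A.mulVec ((A ^ t).mulVec v) := by
        rw [Matrix.mulVec_mulVec, ← pow_succ']
      rw [hrw]
      have h1 : ∀ q, A p q * (lam ^ t * v q) ≤ A p q * ((A ^ t).mulVec v) q :=
        fun q => mul_le_mul_of_nonneg_left (ih q) (hA p q)
      calc lam ^ (t + 1) * v p = lam ^ t * (lam * v p) := by ring
        _ ≤ lam ^ t * (A.mulVec v p) :=
            mul_le_mul_of_nonneg_left (hAv p) (pow_nonneg hlam t)
        _ = ∑ q, A p q * (lam ^ t * v q) := by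
            rw [Matrix.mulVec, dotProduct, Finset.mul_sum]
            exact Finset.sum_congr rfl fun q _ => by ring
        _ ≤ ∑ q, A p q * ((A ^ t).mulVec v) q := Finset.sum_le_sum fun q _ => h1 q
        _ = A.mulVec ((A ^ t).mulVec v) p := by
            rw [Matrix.mulVec, dotProduct]
  -- pick the index maximizing v
  obtain ⟨p₀, -, hmax⟩ := Finset.exists_max_image Finset.univ v ⟨Classical.arbitrary k,
    Finset.mem_univ _⟩
  have hnorm : ∀ t : ℕ, lam ^ t ≤ ‖A ^ t‖ := by
    intro t
    have h1 : lam ^ t * v p₀ ≤ ∑ q, (A ^ t) p₀ q * v q := hpow t p₀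
    have h2 : ∑ q, (A ^ t) p₀ q * v q ≤ (∑ q, (A ^ t) p₀ q) * v p₀ := by
      rw [Finset.sum_mul]
      exact Finset.sum_le_sum fun q _ => mul_le_mul_of_nonneg_left (hmax q (Finset.mem_univ q))
        (pow_entry_nonneg A hA t p₀ q)
    have h3 : lam ^ t ≤ ∑ q, (A ^ t) p₀ q :=
      le_of_mul_le_mul_right (h1.trans h2) (hv p₀)
    refine h3.trans ?_
    have h4 : (∑ q, (A ^ t) p₀ q) ≤ ((∑ q, ‖(A ^ t) p₀ q‖₊ : ℝ≥0) : ℝ) := by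
      push_cast
      exact Finset.sum_le_sum fun q _ => le_abs_self _
    refine h4.trans ?_
    exact_mod_cast (rowsum_le_nnnorm (A ^ t) p₀)
  have hnn : ∀ t : ℕ, lam.toNNReal ^ t ≤ ‖A ^ t‖₊ := by
    intro t
    rw [← Real.toNNReal_pow hlam]
    have := Real.toNNReal_mono (hnorm t)
    rwa [norm_toNNReal] at this
  haveI : CompleteSpace (Matrix k k ℂ) := FiniteDimensional.complete ℂ _
  have hg := spectrum.pow_nnnorm_pow_one_div_tendsto_nhds_spectralRadius
    (A.map Complex.ofReal)
  refine ge_of_tendsto hg ?_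
  filter_upwards [Filter.eventually_ge_atTop 1] with t ht
  have ht0 : (t : ℝ) ≠ 0 := by positivity
  have key : ((lam.toNNReal : ℝ≥0∞) ^ (t : ℕ)) ^ (1 / (t : ℝ)) ≤
      ((‖(A.map Complex.ofReal) ^ t‖₊ : ℝ≥0∞)) ^ (1 / (t : ℝ)) := by
    apply ENNReal.rpow_le_rpow _ (by positivity)
    rw [map_pow', nnnorm_map_ofReal]
    exact_mod_cast ENNReal.coe_le_coe.mpr (hnn t)
  calc (lam.toNNReal : ℝ≥0∞) = ((lam.toNNReal : ℝ≥0∞) ^ (t : ℕ)) ^ (1 / (t : ℝ)) := by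
        rw [← ENNReal.rpow_natCast, ← ENNReal.rpow_mul, mul_one_div_cancel ht0,
          ENNReal.rpow_one]
    _ ≤ _ := key


set_option maxHeartbeats 1000000 in
lemma exists_spectrum_re_ge [Nonempty k] (M : Matrix k k ℝ)
    (hMetz : ∀ p q, p ≠ q → 0 ≤ M p q)
    (v : k → ℝ) (hv : ∀ p, 0 < v p) (lam : ℝ) (hlam : 0 < lam)
    (hMv : ∀ p, lam * v p ≤ M.mulVec v p) :
    ∃ z ∈ spectrum ℂ (M.map Complex.ofReal), lam ≤ z.re := by
  by_contra hcon
  push_neg at hcon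
  haveI : CompleteSpace (Matrix k k ℂ) := FiniteDimensional.complete ℂ _
  haveI : Nontrivial (Matrix k k ℂ) := inferInstance
  set Mc := M.map Complex.ofReal with hMc
  have hck : IsCompact (spectrum ℂ Mc) := spectrum.isCompact Mc
  have hne : (spectrum ℂ Mc).Nonempty := spectrum.nonempty Mc
  obtain ⟨z₀, hz₀mem, hz₀⟩ := hck.exists_isMaxOn hne Complex.continuous_re.continuousOn
  set ε := lam - z₀.re with hεdef
  have hεpos : 0 < ε := sub_pos.mpr (hcon z₀ hz₀mem)
  obtain ⟨z₁, hz₁mem, hz₁⟩ := hck.exists_isMaxOn hne continuous_norm.continuousOn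
  set R := ‖z₁‖ with hRdef
  have hR0 : 0 ≤ R := norm_nonneg z₁
  set c : ℝ := max (R + R ^ 2 / ε + ε) (1 + Finset.univ.sup' Finset.univ_nonempty
    (fun p => -(M p p))) with hcdef
  have hc1 : R + R ^ 2 / ε + ε ≤ c := le_max_left _ _
  have hc0 : 0 ≤ c := le_trans (by positivity) hc1
  set A : Matrix k k ℝ := c • (1 : Matrix k k ℝ) + M with hAdef
  have hA : ∀ p q, 0 ≤ A p q := by
    intro p q
    by_cases h : p = q
    · subst h
      have h2 : -(M p p) ≤ Finset.univ.sup' Finset.univ_nonempty (fun p => -(M p p)) :=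
        Finset.le_sup' (fun p => -(M p p)) (Finset.mem_univ p)
      have h3 : 1 + Finset.univ.sup' Finset.univ_nonempty (fun p => -(M p p)) ≤ c :=
        le_max_right _ _
      simp only [hAdef, Matrix.add_apply, Matrix.smul_apply, Matrix.one_apply_eq, smul_eq_mul,
        mul_one]
      linarith
    · simp only [hAdef, Matrix.add_apply, Matrix.smul_apply, Matrix.one_apply_ne h, smul_eq_mul,
        mul_zero, zero_add]
      exact hMetz p q h
  have hAv : ∀ p, (lam + c) * v p ≤ A.mulVec v p := by
    intro p
    have : A.mulVec v = c • v + M.mulVec v := by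
      rw [hAdef, Matrix.add_mulVec, Matrix.smul_mulVec, Matrix.one_mulVec]
    rw [this]
    have := hMv p
    simp only [Pi.add_apply, Pi.smul_apply, smul_eq_mul]
    nlinarith [hv p]
  have hsr := spectralRadius_ge A hA v hv (lam + c) (by linarith) hAv
  obtain ⟨w, hw, hwnorm⟩ := spectrum.exists_nnnorm_eq_spectralRadius (A.map Complex.ofReal)
  have hle1 : ((lam + c).toNNReal : ℝ≥0∞) ≤ (‖w‖₊ : ℝ≥0∞) := hwnorm ▸ hsr
  have hle2 : (lam + c).toNNReal ≤ ‖w‖₊ := by exact_mod_cast hle1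
  have hlc : lam + c ≤ ‖w‖ := by
    have h := NNReal.coe_le_coe.mpr hle2
    rwa [Real.coe_toNNReal _ (by linarith)] at h
  -- shift the spectrum
  have hAmap : A.map Complex.ofReal = algebraMap ℂ (Matrix k k ℂ) (c : ℂ) + Mc := by
    ext p q
    simp only [hAdef, Matrix.map_apply, Matrix.add_apply, Matrix.smul_apply,
      Algebra.algebraMap_eq_smul_one, Matrix.smul_apply, Matrix.one_apply, smul_eq_mul, hMc]
    by_cases h : p = q <;> simp [h] <;> push_cast <;> ring
  have hwmem : w ∈ spectrum ℂ (algebraMap ℂ (Matrix k k ℂ) (c : ℂ) + Mc) := hAmap ▸ hw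
  have hzmem : w - (c : ℂ) ∈ spectrum ℂ Mc := by
    have h := (spectrum.add_mem_iff
      (a := algebraMap ℂ (Matrix k k ℂ) (c : ℂ) + Mc) (r := w - (c : ℂ)) (s := (c : ℂ)))
    rw [sub_add_cancel] at h
    have h2 := h.mp hwmem
    rwa [neg_add_cancel_left] at h2
  set z := w - (c : ℂ) with hzdef
  have hre : z.re ≤ lam - ε := by
    have h := hz₀ hzmem
    simp only [Set.mem_setOf_eq] at h
    simp only [hεdef]
    linarith
  have him : z.im ^ 2 ≤ R ^ 2 := by
    have h1 : |z.im| ≤ ‖z‖ := Complex.abs_im_le_norm z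
    have h2 : ‖z‖ ≤ R := hz₁ hzmem
    nlinarith [abs_nonneg z.im, sq_abs z.im]

  have hre0 : -R ≤ z.re := by
    have h1 : |z.re| ≤ ‖z‖ := Complex.abs_re_le_norm z
    have h2 : ‖z‖ ≤ R := hz₁ hzmem
    cases abs_le.mp (h1.trans h2) with
    | intro h _ => linarith
  have hw2 : (lam + c) ^ 2 ≤ (z.re + c) ^ 2 + z.im ^ 2 := by
    have h1 : ‖w‖ ^ 2 = w.re ^ 2 + w.im ^ 2 := by
      rw [Complex.sq_norm, Complex.normSq_apply]; ring
    have hwre : w.re = z.re + c := by simp [hzdef]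
    have hwim : w.im = z.im := by simp [hzdef]
    have hsq : (lam + c) ^ 2 ≤ ‖w‖ ^ 2 := by nlinarith [norm_nonneg w]
    rw [h1, hwre, hwim] at hsq
    exact hsq
  -- derive contradiction
  have hεc : ε * (R + R ^ 2 / ε + ε) ≤ ε * c := mul_le_mul_of_nonneg_left hc1 hεpos.le
  have hεR : ε * (R ^ 2 / ε) = R ^ 2 := by field_simp
  have hcR : R ≤ c := by nlinarith [div_nonneg (sq_nonneg R) hεpos.le]
  have h5 : (z.re + c) ^ 2 ≤ (lam - ε + c) ^ 2 := by nlinarith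
  have h6 : (lam + c) ^ 2 ≤ (lam - ε + c) ^ 2 + R ^ 2 := by linarith
  have h7 : ε * (2 * lam - ε + 2 * c) ≤ R ^ 2 := by nlinarith
  have h8 : ε * R + R ^ 2 + ε ^ 2 ≤ ε * c := by nlinarith [hεc, hεR]
  nlinarith [mul_pos hεpos hlam, mul_nonneg hεpos.le hR0, sq_nonneg ε]


lemma pow_pos_of_chain (P : Matrix k k ℝ) (hP : ∀ p q, 0 ≤ P p q) (hdiag : ∀ p, 0 < P p p)
    {p q : k} (h : Relation.ReflTransGen (fun a b => 0 < P a b) p q) :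
    ∃ t, ∀ s, t ≤ s → 0 < (P ^ s) p q := by
  induction h using Relation.ReflTransGen.head_induction_on with
  | refl =>
    have base : ∀ s, 0 < (P ^ s) q q := by
      intro s
      induction s with
      | zero => simp [Matrix.one_apply_eq]
      | succ s ih =>
        rw [pow_succ', Matrix.mul_apply]
        refine lt_of_lt_of_le (mul_pos (hdiag q) ih) ?_
        exact Finset.single_le_sum
          (fun r _ => mul_nonneg (hP q r) (pow_entry_nonneg P hP s r q)) (Finset.mem_univ q)
    exact ⟨0, fun s _ => base s⟩
  | head hab _ ih =>
    obtain ⟨t, ht⟩ := ih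
    rename_i a b _
    refine ⟨t + 1, fun s hs => ?_⟩
    obtain ⟨s', rfl⟩ : ∃ s', s = s' + 1 := ⟨s - 1, by omega⟩
    rw [pow_succ', Matrix.mul_apply]
    have h1 : 0 < P a b * (P ^ s') b q := mul_pos hab (ht s' (by omega))
    refine lt_of_lt_of_le h1 ?_
    exact Finset.single_le_sum
      (fun r _ => mul_nonneg (hP a r) (pow_entry_nonneg P hP s' r q)) (Finset.mem_univ b)

lemma specSet_bddAbove [Nonempty k] (M : Matrix k k ℝ) :
    BddAbove {r : ℝ | ∃ z ∈ spectrum ℂ (M.map Complex.ofReal), z.re = r} := by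
  haveI : CompleteSpace (Matrix k k ℂ) := FiniteDimensional.complete ℂ _
  have hck : IsCompact (spectrum ℂ (M.map Complex.ofReal)) := spectrum.isCompact _
  have himg := (hck.image Complex.continuous_re).bddAbove
  exact himg

end SpecAux

set_option maxHeartbeats 2000000

/-- If `μ(B F* − D − L*) ≤ 0`, then for each node `i` there exists a
layer `α` such that `δ^α_i > β^α_i − ν^α_i`, where `ν^α_i = ∑_{j ≠ i} q^α_{ij}`. -/
theorem specAbscissa_nonpos_necessary_condition_per_node
    {n m : ℕ} (hn : 2 ≤ n) (hm : 1 ≤ m)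
    (Q : Fin m → Matrix (Fin n) (Fin n) ℝ)
    (hQoff : ∀ (α : Fin m) (i j : Fin n), i ≠ j → 0 ≤ Q α i j)
    (hQdiag : ∀ (α : Fin m) (i : Fin n), Q α i i = -∑ j ∈ Finset.univ \ {i}, Q α i j)
    (hQirr : ∀ (α : Fin m) (i j : Fin n),
      Relation.ReflTransGen (fun a b => 0 < Q α a b) i j)
    (piv : Fin m → Fin n → ℝ) (hpivpos : ∀ α i, 0 < piv α i)
    (hpiveig : ∀ (α : Fin m) (i : Fin n), ∑ j, Q α j i * piv α j = 0)
    (hpivsum : ∀ α, ∑ i, piv α i = 1)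
    (N : Fin m → ℝ) (hN : ∀ α, 0 < N α)
    (β δ : Fin m → Fin n → ℝ)
    (hβ : ∀ α i, 0 < β α i) (hδ : ∀ α i, 0 ≤ δ α i)
    (hδpos : ∀ α, ∃ k, 0 < δ α k)
    (hμ : specAbscissa (pairDiag β * Fstar N piv - pairDiag δ - Lstar Q piv) ≤ 0) :
    ∀ i : Fin n, ∃ α : Fin m,
      β α i - (∑ j ∈ Finset.univ \ {i}, Q α i j) < δ α i := by
  classical
  intro i
  by_contra hcontra
  push_neg at hcontra
  haveI hmne : Nonempty (Fin m) := ⟨⟨0, by omega⟩⟩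
  haveI hnne : Nonempty (Fin n) := ⟨⟨0, by omega⟩⟩
  set M : Matrix (Fin m × Fin n) (Fin m × Fin n) ℝ :=
    pairDiag β * Fstar N piv - pairDiag δ - Lstar Q piv with hMdef
  have hS : ∀ j, 0 < ∑ τ, N τ * piv τ j :=
    fun j => Finset.sum_pos (fun τ _ => mul_pos (hN τ) (hpivpos τ j)) Finset.univ_nonempty
  have hQdiag_nonpos : ∀ (α : Fin m) (a : Fin n), Q α a a ≤ 0 := by
    intro α a
    rw [hQdiag]
    have : (0:ℝ) ≤ ∑ j ∈ Finset.univ \ {a}, Q α a j :=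
      Finset.sum_nonneg fun j hj => hQoff α a j
        (fun h => by simp [h] at hj)
    linarith
  have hMentry : ∀ p q : Fin m × Fin n, M p q =
      (if p.2 = q.2 then β p.1 p.2 * (N q.1 * piv q.1 p.2 / ∑ τ, N τ * piv τ p.2) else 0)
      - (if p = q then δ p.1 p.2 else 0)
      - (if p.1 = q.1 then
          (if p.2 = q.2 then ∑ j ∈ Finset.univ \ {p.2}, Q p.1 p.2 j
           else -(Q p.1 q.2 p.2 * piv p.1 q.2 / piv p.1 p.2)) else 0) := by
    intro p q
    simp only [hMdef, Matrix.sub_apply, pairDiag, Fstar, Lstar, Matrix.diagonal_mul,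
      Matrix.diagonal_apply, Matrix.of_apply, mul_ite, mul_zero]
  -- Metzler property
  have hMetz : ∀ p q : Fin m × Fin n, p ≠ q → 0 ≤ M p q := by
    rintro ⟨p1, p2⟩ ⟨q1, q2⟩ hpq
    rw [hMentry]
    dsimp only
    by_cases h1 : p1 = q1 <;> by_cases h2 : p2 = q2
    · exact absurd (Prod.ext h1 h2) hpq
    · subst h1
      have hq : 0 ≤ Q p1 q2 p2 := hQoff p1 q2 p2 (fun h => h2 h.symm)
      have h3 := hpivpos p1 q2
      have h4 := hpivpos p1 p2
      have h5 : 0 ≤ Q p1 q2 p2 * piv p1 q2 / piv p1 p2 := by positivity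
      simp only [h2, hpq, if_true, if_false, eq_self_iff_true, if_neg, if_pos]
      simp [h2, hpq]
      positivity
    · subst h2
      have h3 : 0 ≤ β p1 p2 * (N q1 * piv q1 p2 / ∑ τ, N τ * piv τ p2) := by
        have := (hβ p1 p2).le
        have := (hN q1).le
        have := (hpivpos q1 p2).le
        have := (hS p2).le
        positivity
      simp [h1, hpq]
      positivity
    · simp [h1, h2, hpq]
  -- the seed vector and its image
  set v : Fin m × Fin n → ℝ := fun q => if q.2 = i then 1 else 0 with hvdef
  have hv0 : ∀ q, 0 ≤ v q := fun q => by by_cases h : q.2 = i <;> simp [hvdef, h]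
  set u := M.mulVec v with hudef
  have hu : ∀ p : Fin m × Fin n, u p =
      if p.2 = i then β p.1 i - δ p.1 i - ∑ j ∈ Finset.univ \ {i}, Q p.1 i j
      else Q p.1 i p.2 * piv p.1 i / piv p.1 p.2 := by
    rintro ⟨σ, j⟩
    have hstep : u (σ, j) = ∑ α : Fin m, M (σ, j) (α, i) := by
      rw [hudef, Matrix.mulVec, dotProduct, Fintype.sum_prod_type]
      refine Finset.sum_congr rfl fun α _ => ?_
      rw [Finset.sum_eq_single i]
      · simp [hvdef]
      · intro l _ hl; simp [hvdef, hl]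
      · intro h; exact absurd (Finset.mem_univ i) h
    rw [hstep]
    by_cases hp : j = i
    · subst hp
      simp only [if_pos rfl]
      have hsum : ∀ α : Fin m, M (σ, j) (α, j) =
          β σ j * (N α * piv α j / ∑ τ, N τ * piv τ j)
          - (if α = σ then δ σ j else 0)
          - (if α = σ then ∑ l ∈ Finset.univ \ {j}, Q σ j l else 0) := by
        intro α
        by_cases h : α = σ
        · subst h
          simp [hMentry]
        · have hσα : σ ≠ α := fun hh => h hh.symm
          simp [hMentry, hσα, Prod.ext_iff, h]
      rw [Finset.sum_congr rfl fun α _ => hsum α]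
      rw [Finset.sum_sub_distrib, Finset.sum_sub_distrib, ← Finset.mul_sum]
      rw [Finset.sum_ite_eq' Finset.univ σ (fun _ => δ σ j),
        Finset.sum_ite_eq' Finset.univ σ (fun _ => ∑ l ∈ Finset.univ \ {j}, Q σ j l)]
      have hones : ∑ α, N α * piv α j / (∑ τ, N τ * piv τ j) = 1 := by
        rw [← Finset.sum_div, div_self (hS j).ne']
      rw [hones]
      simp
    · simp only [if_neg hp]
      have hsum : ∀ α : Fin m, M (σ, j) (α, i) =
          if α = σ then Q σ i j * piv σ i / piv σ j else 0 := by
        intro α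
        by_cases h : α = σ
        · subst h
          have h1 := hMentry (α, j) (α, i)
          simp only [hp, if_neg, if_pos rfl] at h1
          simp only [h1]
          have hne : (α, j) ≠ (α, i) := by simp [Prod.ext_iff, hp]
          simp [hp, hne]
        · have hσα : σ ≠ α := fun hh => h hh.symm
          simp [hMentry, hσα, Prod.ext_iff, h, hp]
      rw [Finset.sum_congr rfl fun α _ => hsum α]
      rw [Finset.sum_ite_eq' Finset.univ σ (fun _ => Q σ i j * piv σ i / piv σ j)]
      simp
  have hu0 : ∀ p, 0 ≤ u p := by
    intro p
    rw [hu]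
    by_cases hp : p.2 = i
    · simp only [if_pos hp]
      have := hcontra p.1
      linarith
    · simp only [if_neg hp]
      have hq : 0 ≤ Q p.1 i p.2 := hQoff p.1 i p.2 (fun h => hp h.symm)
      have := hpivpos p.1 i
      have := hpivpos p.1 p.2
      positivity
  -- positive coordinate of u within each layer
  haveI : Nontrivial (Fin n) := ⟨⟨⟨0, by omega⟩, ⟨1, by omega⟩, by simp [Fin.ext_iff]⟩⟩
  have huposat : ∀ σ : Fin m, ∃ jσ : Fin n, jσ ≠ i ∧ 0 < u (σ, jσ) := by
    intro σ
    obtain ⟨j0, hj0⟩ := exists_ne i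
    rcases (hQirr σ i j0).cases_head with h | ⟨c, hc, -⟩
    · exact absurd h.symm hj0
    · have hci : c ≠ i := by
        intro h; rw [h] at hc; exact absurd hc (not_lt.mpr (hQdiag_nonpos σ i))
      refine ⟨c, hci, ?_⟩
      rw [hu]
      simp only [if_neg hci]
      exact div_pos (mul_pos hc (hpivpos σ i)) (hpivpos σ c)
  choose jfun hjne hjpos using huposat
  -- the booster matrix P
  set c₀ : ℝ := 1 + Finset.univ.sup' Finset.univ_nonempty
    (fun p : Fin m × Fin n => |M p p|) with hc₀def
  set P : Matrix (Fin m × Fin n) (Fin m × Fin n) ℝ := c₀ • 1 + M with hPdef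
  have hPnn : ∀ p q, 0 ≤ P p q := by
    intro p q
    by_cases h : p = q
    · subst h
      have h2 : |M p p| ≤ Finset.univ.sup' Finset.univ_nonempty
          (fun p : Fin m × Fin n => |M p p|) :=
        Finset.le_sup' (fun p : Fin m × Fin n => |M p p|) (Finset.mem_univ p)
      have h3 := neg_abs_le (M p p)
      simp only [hPdef, Matrix.add_apply, Matrix.smul_apply, Matrix.one_apply_eq,
        smul_eq_mul, mul_one, hc₀def]
      linarith
    · simp only [hPdef, Matrix.add_apply, Matrix.smul_apply, Matrix.one_apply_ne h,
        smul_eq_mul, mul_zero, zero_add]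
      exact hMetz p q h
  have hPdiag : ∀ p, 0 < P p p := by
    intro p
    have h2 : |M p p| ≤ Finset.univ.sup' Finset.univ_nonempty
        (fun p : Fin m × Fin n => |M p p|) :=
      Finset.le_sup' (fun p : Fin m × Fin n => |M p p|) (Finset.mem_univ p)
    have h3 := neg_abs_le (M p p)
    simp only [hPdef, Matrix.add_apply, Matrix.smul_apply, Matrix.one_apply_eq,
      smul_eq_mul, mul_one, hc₀def]
    linarith
  have hcomm : Commute M P := by
    rw [hPdef]
    exact ((Commute.one_right M).smul_right c₀).add_right (Commute.refl M)
  -- edges of P within a layer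
  have hedge : ∀ (σ : Fin m) (a b : Fin n), 0 < Q σ b a → 0 < P (σ, a) (σ, b) := by
    intro σ a b hQ
    by_cases h : a = b
    · subst h; exact hPdiag _
    · have hne : (σ, a) ≠ (σ, b) := by simp [Prod.ext_iff, h]
      have : P (σ, a) (σ, b) = M (σ, a) (σ, b) := by
        simp [hPdef, Matrix.one_apply_ne hne]
      rw [this, hMentry]
      have h1 := hpivpos σ a
      have h2 := hpivpos σ b
      have h3 : 0 < Q σ b a * piv σ b / piv σ a := div_pos (mul_pos hQ h2) h1
      simp only []
      have hab : ¬ (a = b) := h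
      simp [hab, hne]
      exact h3
  -- chains
  have hchain : ∀ (p : Fin m × Fin n) (tgt : Fin n),
      Relation.ReflTransGen (fun a b => 0 < P a b) p (p.1, tgt) := by
    rintro ⟨σ, j⟩ tgt
    have h1 : Relation.ReflTransGen (fun a b => 0 < Q σ a b) tgt j := hQirr σ tgt j
    have h2 : Relation.ReflTransGen (Function.swap fun a b => 0 < Q σ a b) j tgt :=
      Relation.ReflTransGen.swap j tgt h1
    exact Relation.ReflTransGen.lift (p := fun a b => 0 < P a b) (fun x => (σ, x))
      (fun a b hab => hedge σ a b hab) j tgt h2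
  -- positivity of boosted vectors
  have hreach : ∀ (w : Fin m × Fin n → ℝ), (∀ q, 0 ≤ w q) →
      ∀ (p tgt : Fin m × Fin n), 0 < w tgt →
      Relation.ReflTransGen (fun a b => 0 < P a b) p tgt →
      ∃ t, ∀ s, t ≤ s → 0 < ((P ^ s).mulVec w) p := by
    intro w hw p tgt hwt hch
    obtain ⟨t, ht⟩ := SpecAux.pow_pos_of_chain P hPnn hPdiag hch
    refine ⟨t, fun s hs => ?_⟩
    have h1 : 0 < (P ^ s) p tgt * w tgt := mul_pos (ht s hs) hwt
    have h2 : (P ^ s) p tgt * w tgt ≤ ∑ q, (P ^ s) p q * w q :=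
      Finset.single_le_sum
        (fun r _ => mul_nonneg (SpecAux.pow_entry_nonneg P hPnn s p r) (hw r))
        (Finset.mem_univ tgt)
    rw [Matrix.mulVec, dotProduct]
    exact lt_of_lt_of_le h1 h2
  have hTv : ∀ p : Fin m × Fin n, ∃ t, ∀ s, t ≤ s → 0 < ((P ^ s).mulVec v) p := by
    intro p
    refine hreach v hv0 p (p.1, i) ?_ (hchain p i)
    simp [hvdef]
  have hTu : ∀ p : Fin m × Fin n, ∃ t, ∀ s, t ≤ s → 0 < ((P ^ s).mulVec u) p := by
    intro p
    exact hreach u hu0 p (p.1, jfun p.1) (hjpos p.1) (hchain p (jfun p.1))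
  choose tv htv using hTv
  choose tu htu using hTu
  set T : ℕ := Finset.univ.sup (fun p : Fin m × Fin n => max (tv p) (tu p)) with hTdef
  have hTv' : ∀ p, tv p ≤ T := fun p => le_trans (le_max_left _ _)
    (Finset.le_sup (f := fun p : Fin m × Fin n => max (tv p) (tu p)) (Finset.mem_univ p))
  have hTu' : ∀ p, tu p ≤ T := fun p => le_trans (le_max_right _ _)
    (Finset.le_sup (f := fun p : Fin m × Fin n => max (tv p) (tu p)) (Finset.mem_univ p))
  set v' := (P ^ T).mulVec v with hv'def
  have hv'pos : ∀ p, 0 < v' p := fun p => htv p T (hTv' p)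
  have hMv' : M.mulVec v' = (P ^ T).mulVec u := by
    rw [hv'def, hudef, Matrix.mulVec_mulVec, Matrix.mulVec_mulVec,
      (hcomm.pow_right T).eq]
  have hu'pos : ∀ p, 0 < (M.mulVec v') p := by
    intro p
    rw [hMv']
    exact htu p T (hTu' p)
  set lam : ℝ := Finset.univ.inf' Finset.univ_nonempty
    (fun p => (M.mulVec v') p / v' p) with hlamdef
  have hlampos : 0 < lam := by
    rw [hlamdef]
    rw [Finset.lt_inf'_iff]
    exact fun p _ => div_pos (hu'pos p) (hv'pos p)
  have hlamle : ∀ p, lam * v' p ≤ (M.mulVec v') p := by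
    intro p
    have h := Finset.inf'_le (fun p => (M.mulVec v') p / v' p) (Finset.mem_univ p)
    calc lam * v' p ≤ ((M.mulVec v') p / v' p) * v' p := by
          apply mul_le_mul_of_nonneg_right _ (hv'pos p).le
          exact h
      _ = (M.mulVec v') p := div_mul_cancel₀ _ (hv'pos p).ne'
  obtain ⟨z, hz, hzre⟩ := SpecAux.exists_spectrum_re_ge M hMetz v' hv'pos lam hlampos hlamle
  have hmem : z.re ∈ {r : ℝ | ∃ w ∈ spectrum ℂ (M.map Complex.ofReal), w.re = r} :=
    ⟨z, hz, rfl⟩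
  have hle := le_csSup (SpecAux.specSet_bddAbove M) hmem
  have : specAbscissa M ≤ 0 := hμ
  rw [specAbscissa] at this
  linarith
end

section
/- If the spectral abscissa satisfies μ(B F* − D − L*) ≤ 0, then there exist a node i ∈ {1,…,n} and a layer α ∈ {1,…,m} such that δ^α_i ≥ β^α_i. -/
open Matrix BigOperators Finset

open scoped NNReal ENNReal

section Key

attribute [local instance] Matrix.linftyOpNormedRing Matrix.linftyOpNormedAlgebra

variable {k : Type*} [Fintype k] [DecidableEq k] [Nonempty k]

noncomputable local instance : CompleteSpace (Matrix k k ℂ) :=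
  FiniteDimensional.complete ℂ _

/-- A Metzler matrix whose row sums are all at least `ε > 0` has a spectrum point
with real part `> 0` (in fact it cannot have all real parts `≤ 0`). -/
lemma metzler_rowsum_pos_not_all_re_nonpos
    (M : Matrix k k ℝ) {ε : ℝ} (hε : 0 < ε)
    (hoff : ∀ p q : k, p ≠ q → 0 ≤ M p q)
    (hrow : ∀ p : k, ε ≤ ∑ q, M p q)
    (hall : ∀ z ∈ spectrum ℂ (M.map Complex.ofReal), z.re ≤ 0) : False := by
  classical
  set Mc : Matrix k k ℂ := M.map Complex.ofReal with hMcdef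
  set R : ℝ := ‖Mc‖ with hRdef
  have hR0 : 0 ≤ R := norm_nonneg _
  obtain ⟨p₀⟩ := (inferInstance : Nonempty k)
  set s : ℝ :=
    ((Finset.univ.sup' Finset.univ_nonempty fun p => -M p p) ⊔ (R ^ 2 / (2 * ε) + 1)) ⊔ 0
    with hsdef
  have hs0 : 0 ≤ s := le_sup_right
  have hsd : ∀ p : k, -M p p ≤ s := fun p =>
    le_trans (Finset.le_sup' (fun p => -M p p) (Finset.mem_univ p))
      (le_trans le_sup_left le_sup_left)
  have hsR : R ^ 2 < 2 * s * ε := by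
    have h1 : R ^ 2 / (2 * ε) + 1 ≤ s := le_trans le_sup_right le_sup_left
    have h2 : R ^ 2 / (2 * ε) * (2 * ε) = R ^ 2 := div_mul_cancel₀ _ (by positivity)
    nlinarith
  set A : Matrix k k ℝ := M + s • (1 : Matrix k k ℝ) with hAdef
  have hA : ∀ p q : k, 0 ≤ A p q := by
    intro p q
    by_cases h : p = q
    · subst h
      simp only [hAdef, Matrix.add_apply, Matrix.smul_apply, Matrix.one_apply_eq, smul_eq_mul,
        mul_one]
      linarith [hsd p]
    · simp only [hAdef, Matrix.add_apply, Matrix.smul_apply, Matrix.one_apply_ne h, smul_eq_mul,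
        mul_zero, add_zero]
      exact hoff p q h
  set t : ℝ := ε + s with htdef
  have ht : 0 < t := by positivity
  have hArow : ∀ p : k, t ≤ ∑ q, A p q := by
    intro p
    have : ∑ q, A p q = (∑ q, M p q) + s := by
      simp [hAdef, Finset.sum_add_distrib, Matrix.one_apply]
    rw [this]
    have := hrow p
    linarith
  have hpow : ∀ d : ℕ, (∀ p q : k, 0 ≤ (A ^ d) p q) ∧ ∀ p : k, t ^ d ≤ ∑ q, (A ^ d) p q := by
    intro d
    induction d with
    | zero =>
      constructor
      · intro p q
        by_cases h : p = q <;> simp [Matrix.one_apply, h]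
      · intro p
        simp [Matrix.one_apply]
    | succ d ih =>
      have hmul : A ^ (d + 1) = A * A ^ d := by rw [pow_succ']
      constructor
      · intro p q
        rw [hmul, Matrix.mul_apply]
        exact Finset.sum_nonneg fun r _ => mul_nonneg (hA p r) (ih.1 r q)
      · intro p
        rw [hmul]
        have hswap : ∑ q, (A * A ^ d) p q = ∑ r, A p r * ∑ q, (A ^ d) r q := by
          simp_rw [Matrix.mul_apply, Finset.mul_sum]
          exact Finset.sum_comm
        rw [hswap]
        calc t ^ (d + 1) = t ^ d * t := by ring
          _ ≤ t ^ d * ∑ r, A p r := by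
              exact mul_le_mul_of_nonneg_left (hArow p) (pow_nonneg ht.le d)
          _ = ∑ r, A p r * t ^ d := by rw [Finset.mul_sum]; simp [mul_comm]
          _ ≤ ∑ r, A p r * ∑ q, (A ^ d) r q :=
              Finset.sum_le_sum fun r _ =>
                mul_le_mul_of_nonneg_left (ih.2 r) (hA p r)
  set Ac : Matrix k k ℂ := A.map Complex.ofReal with hAcdef
  have hmap : ∀ d : ℕ, Ac ^ d = (A ^ d).map Complex.ofReal := by
    intro d
    have := map_pow (RingHom.mapMatrix (m := k) Complex.ofRealHom) A d
    simp only [RingHom.mapMatrix_apply] at this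
    exact this.symm
  have hnormpow : ∀ d : ℕ, t ^ d ≤ ‖Ac ^ d‖ := by
    intro d
    rw [hmap d, Matrix.linfty_opNorm_def]
    have h1 : t ^ d ≤ ∑ j, ‖((A ^ d).map Complex.ofReal) p₀ j‖ := by
      refine le_trans ((hpow d).2 p₀) (Finset.sum_le_sum fun j _ => ?_)
      rw [Matrix.map_apply, Complex.norm_real, Real.norm_eq_abs]
      exact le_abs_self _
    refine le_trans h1 ?_
    have h2 : (∑ j, ‖((A ^ d).map Complex.ofReal) p₀ j‖₊ : ℝ≥0) ≤
        Finset.univ.sup fun i => ∑ j, ‖((A ^ d).map Complex.ofReal) i j‖₊ :=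
      Finset.le_sup (f := fun i => ∑ j, ‖((A ^ d).map Complex.ofReal) i j‖₊) (Finset.mem_univ p₀)
    calc (∑ j, ‖((A ^ d).map Complex.ofReal) p₀ j‖ : ℝ)
        = ((∑ j, ‖((A ^ d).map Complex.ofReal) p₀ j‖₊ : ℝ≥0) : ℝ) := by
          push_cast; rfl
      _ ≤ _ := NNReal.coe_le_coe.mpr h2
  -- Gelfand formula: spectral radius is at least t
  have hgel := spectrum.pow_nnnorm_pow_one_div_tendsto_nhds_spectralRadius Ac
  have hrad : ENNReal.ofReal t ≤ spectralRadius ℂ Ac := by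
    refine ge_of_tendsto hgel (Filter.eventually_atTop.mpr ⟨1, fun d hd => ?_⟩)
    have h1 : (ENNReal.ofReal t) ^ d ≤ (‖Ac ^ d‖₊ : ℝ≥0∞) := by
      have e : ENNReal.ofReal ‖Ac ^ d‖ = (‖Ac ^ d‖₊ : ℝ≥0∞) := ofReal_norm _
      rw [← ENNReal.ofReal_pow ht.le, ← e]
      exact ENNReal.ofReal_le_ofReal (hnormpow d)
    have hd0 : (d : ℝ) ≠ 0 := Nat.cast_ne_zero.mpr (by omega)
    have h2 : ENNReal.ofReal t =
        ((ENNReal.ofReal t) ^ d) ^ (1 / d : ℝ) := by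
      rw [← ENNReal.rpow_natCast (ENNReal.ofReal t) d, ← ENNReal.rpow_mul]
      rw [mul_one_div, div_self hd0, ENNReal.rpow_one]
    rw [h2]
    exact ENNReal.rpow_le_rpow h1 (by positivity)
  obtain ⟨z', hz'mem, hz'norm⟩ := spectrum.exists_nnnorm_eq_spectralRadius (a := Ac)
  have hz'ge : t ≤ ‖z'‖ := by
    rw [← hz'norm] at hrad
    have e : ENNReal.ofReal ‖z'‖ = (‖z'‖₊ : ℝ≥0∞) := ofReal_norm _
    rw [← e] at hrad
    exact (ENNReal.ofReal_le_ofReal_iff (norm_nonneg _)).mp hrad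
  -- translate the spectrum
  have hz : z' - (s : ℂ) ∈ spectrum ℂ Mc := by
    rw [spectrum.mem_iff] at hz'mem ⊢
    have heq : algebraMap ℂ (Matrix k k ℂ) (z' - (s : ℂ)) - Mc =
        algebraMap ℂ (Matrix k k ℂ) z' - Ac := by
      have hAc : Ac = Mc + algebraMap ℂ (Matrix k k ℂ) (s : ℂ) := by
        ext p q
        by_cases h : p = q <;>
          simp [hAcdef, hAdef, hMcdef, Matrix.map_apply, Matrix.add_apply, Matrix.smul_apply,
            Matrix.one_apply, Matrix.algebraMap_matrix_apply, h]
      rw [hAc, map_sub]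
      abel
    rwa [heq]
  have h1 := hall _ hz
  have h2 : ‖z' - (s : ℂ)‖ ≤ R := spectrum.norm_le_norm_of_mem hz
  set w : ℂ := z' - (s : ℂ) with hwdef
  have hre : z'.re = w.re + s := by simp [hwdef]
  have him : z'.im = w.im := by simp [hwdef]
  have hz'sq : ‖z'‖ ^ 2 = z'.re ^ 2 + z'.im ^ 2 := by
    rw [Complex.sq_norm, Complex.normSq_apply]; ring
  have hwsq : ‖w‖ ^ 2 = w.re ^ 2 + w.im ^ 2 := by
    rw [Complex.sq_norm, Complex.normSq_apply]; ring
  have hwR : w.re ^ 2 + w.im ^ 2 ≤ R ^ 2 := by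
    rw [← hwsq]
    exact pow_le_pow_left₀ (norm_nonneg _) h2 2
  have hsq : t ^ 2 ≤ ‖z'‖ ^ 2 := pow_le_pow_left₀ ht.le hz'ge 2
  rw [hz'sq, hre, him] at hsq
  nlinarith [h1, hs0, hε, hsR, hwR]

/-- If `μ(B F* − D − L*) ≤ 0`, then there exist a node `i` and a layer
`α` such that `δ^α_i ≥ β^α_i`. -/
theorem specAbscissa_nonpos_necessary_condition_some_node
    {n m : ℕ} (hn : 2 ≤ n) (hm : 1 ≤ m)
    (Q : Fin m → Matrix (Fin n) (Fin n) ℝ)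
    (hQoff : ∀ (α : Fin m) (i j : Fin n), i ≠ j → 0 ≤ Q α i j)
    (hQdiag : ∀ (α : Fin m) (i : Fin n), Q α i i = -∑ j ∈ Finset.univ \ {i}, Q α i j)
    (hQirr : ∀ (α : Fin m) (i j : Fin n),
      Relation.ReflTransGen (fun a b => 0 < Q α a b) i j)
    (piv : Fin m → Fin n → ℝ) (hpivpos : ∀ α i, 0 < piv α i)
    (hpiveig : ∀ (α : Fin m) (i : Fin n), ∑ j, Q α j i * piv α j = 0)
    (hpivsum : ∀ α, ∑ i, piv α i = 1)
    (N : Fin m → ℝ) (hN : ∀ α, 0 < N α)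
    (β δ : Fin m → Fin n → ℝ)
    (hβ : ∀ α i, 0 < β α i) (hδ : ∀ α i, 0 ≤ δ α i)
    (hδpos : ∀ α, ∃ k, 0 < δ α k)
    (hμ : specAbscissa (pairDiag β * Fstar N piv - pairDiag δ - Lstar Q piv) ≤ 0) :
    ∃ (i : Fin n) (α : Fin m), β α i ≤ δ α i := by
  classical
  by_contra hcon
  push_neg at hcon
  haveI : Nonempty (Fin m) := ⟨⟨0, hm⟩⟩
  haveI : Nonempty (Fin n) := ⟨⟨0, by omega⟩⟩
  set M : Matrix (Fin m × Fin n) (Fin m × Fin n) ℝ :=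
    pairDiag β * Fstar N piv - pairDiag δ - Lstar Q piv with hMdef
  set S : Fin n → ℝ := fun i => ∑ τ, N τ * piv τ i with hSdef
  have hS : ∀ i, 0 < S i := fun i =>
    Finset.sum_pos (fun τ _ => mul_pos (hN τ) (hpivpos τ i)) Finset.univ_nonempty
  have hsub : ∀ p q : Fin m × Fin n,
      M p q = (pairDiag β * Fstar N piv) p q - pairDiag δ p q - Lstar Q piv p q := by
    intro p q; simp [hMdef, Matrix.sub_apply]
  have hBF : ∀ p q : Fin m × Fin n,
      (pairDiag β * Fstar N piv) p q = β p.1 p.2 * Fstar N piv p q := by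
    intro p q; simp [pairDiag, Matrix.diagonal_mul]
  -- off-diagonal entries are nonnegative
  have hoff : ∀ p q : Fin m × Fin n, p ≠ q → 0 ≤ M p q := by
    intro p q hpq
    have hdiagδ : pairDiag δ p q = 0 := Matrix.diagonal_apply_ne _ hpq
    rw [hsub, hdiagδ, hBF, sub_zero]
    by_cases h2 : p.2 = q.2
    · have h1 : ¬(p.1 = q.1) := fun h1 => hpq (Prod.ext h1 h2)
      have hL : Lstar Q piv p q = 0 := by simp [Lstar, h1]
      have hF : Fstar N piv p q = N q.1 * piv q.1 p.2 / S p.2 := by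
        simp [Fstar, h2, hSdef]
      rw [hL, hF, sub_zero]
      exact mul_nonneg (hβ p.1 p.2).le
        (div_nonneg (mul_nonneg (hN q.1).le (hpivpos q.1 p.2).le) (hS p.2).le)
    · have hF : Fstar N piv p q = 0 := by simp [Fstar, h2]
      rw [hF, mul_zero, zero_sub]
      by_cases h1 : p.1 = q.1
      · have hL : Lstar Q piv p q = -(Q p.1 q.2 p.2 * piv p.1 q.2 / piv p.1 p.2) := by
          simp [Lstar, h1, h2]
        rw [hL, neg_neg]
        exact div_nonneg
          (mul_nonneg (hQoff p.1 q.2 p.2 fun h => h2 h.symm) (hpivpos p.1 q.2).le)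
          (hpivpos p.1 p.2).le
      · have hL : Lstar Q piv p q = 0 := by simp [Lstar, h1]
        rw [hL, neg_zero]
  -- row sums
  set ε : ℝ :=
    Finset.univ.inf' Finset.univ_nonempty
      (fun p : Fin m × Fin n => β p.1 p.2 - δ p.1 p.2) with hεdef
  have hε : 0 < ε :=
    (Finset.lt_inf'_iff _).mpr fun p _ => sub_pos.mpr (hcon p.2 p.1)
  have hrow : ∀ p : Fin m × Fin n, ε ≤ ∑ q, M p q := by
    rintro ⟨α, i⟩
    have h1 : ∑ q : Fin m × Fin n, (pairDiag β * Fstar N piv) (α, i) q = β α i := by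
      simp only [hBF]
      rw [← Finset.mul_sum]
      have hsum1 : ∑ q : Fin m × Fin n, Fstar N piv (α, i) q = 1 := by
        rw [Fintype.sum_prod_type]
        have : ∀ σ : Fin m, ∑ j : Fin n, Fstar N piv (α, i) (σ, j)
            = N σ * piv σ i / S i := by
          intro σ
          simp [Fstar, hSdef, Finset.sum_ite_eq]
        simp_rw [this]
        rw [← Finset.sum_div, div_self (hS i).ne']
      rw [hsum1, mul_one]
    have h2 : ∑ q : Fin m × Fin n, pairDiag δ (α, i) q = δ α i := by
      simp [pairDiag, Matrix.diagonal_apply, Finset.sum_ite_eq]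
    have h3 : ∑ q : Fin m × Fin n, Lstar Q piv (α, i) q = 0 := by
      rw [Fintype.sum_prod_type]
      rw [Finset.sum_eq_single α (fun σ _ hσ =>
        Finset.sum_eq_zero fun j _ => by
          simp only [Lstar, Matrix.of_apply]
          exact if_neg (fun h : α = σ => hσ h.symm))
        (fun h => absurd (Finset.mem_univ α) h)]
      rw [Finset.sum_eq_add_sum_sdiff_singleton_of_mem (Finset.mem_univ i)]
      have hd : Lstar Q piv (α, i) (α, i) = ∑ j ∈ Finset.univ \ {i}, Q α i j := by
        simp [Lstar]
      have hod : ∀ j ∈ Finset.univ \ {i},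
          Lstar Q piv (α, i) (α, j) = -(Q α j i * piv α j / piv α i) := by
        intro j hj
        have hji : ¬(i = j) := by
          intro h; subst h; simp at hj
        simp [Lstar, hji]
      rw [hd, Finset.sum_congr rfl hod]
      have hsplit : ∑ j ∈ Finset.univ \ {i}, Q α j i * piv α j
          = (∑ j ∈ Finset.univ \ {i}, Q α i j) * piv α i := by
        have := hpiveig α i
        rw [Finset.sum_eq_add_sum_sdiff_singleton_of_mem (Finset.mem_univ i)
          (fun j => Q α j i * piv α j)] at this
        rw [hQdiag α i] at this
        linarith
      rw [Finset.sum_neg_distrib, ← Finset.sum_div, hsplit,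
        mul_div_assoc, div_self (hpivpos α i).ne', mul_one]
      ring
    have hsum : ∑ q : Fin m × Fin n, M (α, i) q = β α i - δ α i := by
      simp only [hsub, Finset.sum_sub_distrib]
      rw [h1, h2, h3]; ring
    rw [hsum]
    exact Finset.inf'_le _ (Finset.mem_univ (α, i))
  -- all spectrum points have nonpositive real part
  have hbdd : BddAbove {r : ℝ | ∃ z ∈ spectrum ℂ (M.map Complex.ofReal), z.re = r} := by
    refine ⟨‖M.map Complex.ofReal‖, ?_⟩
    rintro r ⟨z, hz, rfl⟩
    calc z.re ≤ ‖z‖ := Complex.re_le_norm z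
      _ = ‖z‖ := rfl
      _ ≤ ‖M.map Complex.ofReal‖ := spectrum.norm_le_norm_of_mem hz
  have hall : ∀ z ∈ spectrum ℂ (M.map Complex.ofReal), z.re ≤ 0 := by
    intro z hz
    refine le_trans (le_csSup hbdd ⟨z, hz, rfl⟩) ?_
    unfold specAbscissa at hμ
    exact hμ
  exact metzler_rowsum_pos_not_all_re_nonpos M hε hoff hrow hall

end Key
end

section
/- If δ^α_i ≥ β^α_i for every node i ∈ {1,…,n} and every layer α ∈ {1,…,m}, then the spectral abscissa satisfies μ(B F* − D − L*) ≤ 0. -/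
open Matrix BigOperators Finset

/-- If `δ^α_i ≥ β^α_i` for every node `i` and every layer `α`, then
`μ(B F* − D − L*) ≤ 0`. -/
theorem specAbscissa_nonpos_of_recovery_dominates_infection
    {n m : ℕ} (hn : 2 ≤ n) (hm : 1 ≤ m)
    (Q : Fin m → Matrix (Fin n) (Fin n) ℝ)
    (hQoff : ∀ (α : Fin m) (i j : Fin n), i ≠ j → 0 ≤ Q α i j)
    (hQdiag : ∀ (α : Fin m) (i : Fin n), Q α i i = -∑ j ∈ Finset.univ \ {i}, Q α i j)
    (hQirr : ∀ (α : Fin m) (i j : Fin n),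
      Relation.ReflTransGen (fun a b => 0 < Q α a b) i j)
    (piv : Fin m → Fin n → ℝ) (hpivpos : ∀ α i, 0 < piv α i)
    (hpiveig : ∀ (α : Fin m) (i : Fin n), ∑ j, Q α j i * piv α j = 0)
    (hpivsum : ∀ α, ∑ i, piv α i = 1)
    (N : Fin m → ℝ) (hN : ∀ α, 0 < N α)
    (β δ : Fin m → Fin n → ℝ)
    (hβ : ∀ α i, 0 < β α i) (hδ : ∀ α i, 0 ≤ δ α i)
    (hδpos : ∀ α, ∃ k, 0 < δ α k)
    (hδβ : ∀ (i : Fin n) (α : Fin m), β α i ≤ δ α i) :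
    specAbscissa (pairDiag β * Fstar N piv - pairDiag δ - Lstar Q piv) ≤ 0 := by
  classical
  set M : Matrix (Fin m × Fin n) (Fin m × Fin n) ℝ :=
    pairDiag β * Fstar N piv - pairDiag δ - Lstar Q piv with hMdef
  have hS : ∀ i : Fin n, 0 < ∑ τ, N τ * piv τ i := fun i =>
    Finset.sum_pos (fun τ _ => mul_pos (hN τ) (hpivpos τ i)) ⟨⟨0, hm⟩, Finset.mem_univ _⟩
  -- entrywise description of M
  have hentry : ∀ q q' : Fin m × Fin n,
      M q q' = β q.1 q.2 * Fstar N piv q q'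
        - (if q = q' then δ q.1 q.2 else 0) - Lstar Q piv q q' := by
    intro q q'
    simp [hMdef, pairDiag, Matrix.sub_apply, Matrix.diagonal_mul, Matrix.diagonal_apply]
  -- off-diagonal entries are nonnegative
  have hoff : ∀ q q' : Fin m × Fin n, q ≠ q' → 0 ≤ M q q' := by
    rintro ⟨α, i⟩ ⟨σ, j⟩ hne
    rw [hentry]
    simp only [if_neg hne, Fstar, Lstar, Matrix.of_apply]
    by_cases hij : i = j
    · subst hij
      have hασ : ¬ (α = σ) := fun h => hne (by simp [h])
      simp only [if_pos rfl, if_neg hασ]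
      have : 0 ≤ β α i * (N σ * piv σ i / ∑ τ, N τ * piv τ i) :=
        mul_nonneg (hβ α i).le
          (div_nonneg (mul_nonneg (hN σ).le (hpivpos σ i).le) (hS i).le)
      simpa using this
    · by_cases hασ : α = σ
      · subst hασ
        have h0 : 0 ≤ Q α j i * piv α j / piv α i :=
          div_nonneg (mul_nonneg (hQoff α j i (Ne.symm hij)) (hpivpos α j).le)
            (hpivpos α i).le
        simp only [if_neg hij, if_pos rfl, if_true, eq_self_iff_true, mul_zero,
          zero_sub, sub_neg_eq_add, zero_add, neg_zero, neg_neg]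
        linarith
      · simp [hασ, hij]
  -- row sums
  have hrow : ∀ q : Fin m × Fin n, ∑ q', M q q' = β q.1 q.2 - δ q.1 q.2 := by
    rintro ⟨α, i⟩
    have h1 : ∑ q' : Fin m × Fin n, β α i * Fstar N piv (α, i) q' = β α i := by
      rw [Fintype.sum_prod_type]
      have : ∀ σ : Fin m, ∑ j : Fin n, β α i * Fstar N piv (α, i) (σ, j)
          = β α i * (N σ * piv σ i / ∑ τ, N τ * piv τ i) := by
        intro σ
        simp [Fstar, Finset.sum_ite_eq, mul_ite]
      rw [Finset.sum_congr rfl fun σ _ => this σ, ← Finset.mul_sum, ← Finset.sum_div]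
      rw [div_self (hS i).ne', mul_one]
    have h2 : ∑ q' : Fin m × Fin n, (if (α, i) = q' then δ α i else 0) = δ α i := by
      simp
    have h3 : ∑ q' : Fin m × Fin n, Lstar Q piv (α, i) q' = 0 := by
      rw [Fintype.sum_prod_type]
      have hz : ∀ σ : Fin m, σ ≠ α → ∑ j : Fin n, Lstar Q piv (α, i) (σ, j) = 0 := by
        intro σ hσ
        simp [Lstar, Ne.symm hσ]
      rw [Finset.sum_eq_single α (fun σ _ hσ => hz σ hσ) (by simp)]
      have hα : ∑ j : Fin n, Lstar Q piv (α, i) (α, j)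
          = (∑ j ∈ Finset.univ \ {i}, Q α i j)
            - ∑ j ∈ Finset.univ.erase i, Q α j i * piv α j / piv α i := by
        rw [← Finset.add_sum_erase _ _ (Finset.mem_univ i)]
        have hd : Lstar Q piv (α, i) (α, i) = ∑ j ∈ Finset.univ \ {i}, Q α i j := by
          simp [Lstar]
        have ho : ∀ j ∈ Finset.univ.erase i,
            Lstar Q piv (α, i) (α, j) = -(Q α j i * piv α j / piv α i) := by
          intro j hj
          have : ¬ (i = j) := fun h => (Finset.ne_of_mem_erase hj) h.symm
          simp [Lstar, this]
        rw [hd, Finset.sum_congr rfl ho, Finset.sum_neg_distrib, sub_eq_add_neg]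
      rw [hα]
      have key : ∑ j ∈ Finset.univ.erase i, Q α j i * piv α j
          = (∑ j ∈ Finset.univ \ {i}, Q α i j) * piv α i := by
        have := hpiveig α i
        rw [← Finset.add_sum_erase _ _ (Finset.mem_univ i)] at this
        rw [hQdiag α i] at this
        linarith
      rw [← Finset.sum_div, key, mul_div_assoc, div_self (hpivpos α i).ne', mul_one,
        sub_self]
    calc ∑ q' : Fin m × Fin n, M (α, i) q'
        = ∑ q' : Fin m × Fin n, (β α i * Fstar N piv (α, i) q'
            - (if (α, i) = q' then δ α i else 0) - Lstar Q piv (α, i) q') :=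
          Finset.sum_congr rfl fun q' _ => hentry (α, i) q'
      _ = β α i - δ α i := by
          rw [Finset.sum_sub_distrib, Finset.sum_sub_distrib, h1, h2, h3, sub_zero]
  -- Gershgorin
  refine Real.sSup_le ?_ le_rfl
  rintro r ⟨z, hz, rfl⟩
  have hspec : z ∈ spectrum ℂ (Matrix.toLinAlgEquiv' (M.map Complex.ofReal)) := by
    rwa [AlgEquiv.spectrum_eq]
  have heq : Matrix.toLinAlgEquiv' (M.map Complex.ofReal)
      = Matrix.toLin' (M.map Complex.ofReal) := by
    apply LinearMap.ext; intro v
    rw [Matrix.toLinAlgEquiv'_apply, Matrix.toLin'_apply]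
  have hev : Module.End.HasEigenvalue (Matrix.toLin' (M.map Complex.ofReal)) z := by
    rw [Module.End.hasEigenvalue_iff_mem_spectrum]
    rwa [heq] at hspec
  obtain ⟨k, hk⟩ := eigenvalue_mem_ball hev
  rw [Metric.mem_closedBall, Complex.dist_eq] at hk
  have hdiag : (M.map Complex.ofReal) k k = (M k k : ℂ) := rfl
  have hre : z.re - M k k ≤ ‖z - (M.map Complex.ofReal) k k‖ := by
    rw [hdiag]
    calc z.re - M k k = (z - (M k k : ℂ)).re := by simp
      _ ≤ |(z - (M k k : ℂ)).re| := le_abs_self _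
      _ ≤ ‖z - (M k k : ℂ)‖ := Complex.abs_re_le_norm _
  have hsum : ∑ j ∈ Finset.univ.erase k, ‖(M.map Complex.ofReal) k j‖
      = ∑ j ∈ Finset.univ.erase k, M k j := by
    refine Finset.sum_congr rfl fun j hj => ?_
    have h0 : 0 ≤ M k j := hoff k j (Ne.symm (Finset.ne_of_mem_erase hj))
    have : (M.map Complex.ofReal) k j = (M k j : ℂ) := rfl
    rw [this, Complex.norm_real, Real.norm_of_nonneg h0]
  have hbound : M k k + ∑ j ∈ Finset.univ.erase k, M k j ≤ 0 := by
    have := hrow k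
    rw [← Finset.add_sum_erase _ _ (Finset.mem_univ k)] at this
    have hkk := hδβ k.2 k.1
    linarith
  rw [hsum] at hk
  linarith
end
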